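/- arXiv:1511.04314 — 3 statements merged into one kernel-verified Lean document; each statement's English description precedes it below -/
import Mathlib

section
/- Let s be an exchange matrix and define the basket-quoted prices s̄_i = 1/∑_j s_{i,j} ∈ [0,1] for each i. Then for all i,j, whenever the fraction s̄_j/s̄_i is well-defined (i.e. not 0/0 or ∞/∞), one has s_{i,j} = s̄_j/s̄_i. -/
open MeasureTheory Filter Set Function
open scoped ENNReal

noncomputable section

/-- The product `x * y` of two elements of `[0,∞]` is defined unless `{x, y} = {0, ∞}`. -/
def DefinedProd (x y : ℝ≥0∞) : Prop := ¬(x = 0 ∧ y = ∞) ∧ ¬(x = ∞ ∧ y = 0)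

/-- An exchange matrix: a `d × d` matrix with entries in `[0,∞]` such that `s i i = 1` and
`s i j * s j k = s i k` whenever the product is defined. -/
structure IsExchangeMatrix {d : ℕ} (s : Fin d → Fin d → ℝ≥0∞) : Prop where
  diag : ∀ i, s i i = 1
  consistent : ∀ i j k, DefinedProd (s i j) (s j k) → s i j * s j k = s i k

/-- A value vector for an exchange matrix `s`: `s i j * v j = v i` whenever defined. -/
def IsValueVector {d : ℕ} (s : Fin d → Fin d → ℝ≥0∞) (v : Fin d → ℝ≥0∞) : Prop :=
  ∀ i j, DefinedProd (s i j) (v j) → s i j * v j = v i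

open Classical in
/-- The set of active indices of an exchange matrix: those whose row sum is finite. -/
def activeFinset {d : ℕ} (s : Fin d → Fin d → ℝ≥0∞) : Finset (Fin d) :=
  Finset.univ.filter fun i => ∑ j, s i j < ∞

/-- The market model of the paper: a right-continuous filtration `F` (with `F 0` trivial) on
`[0,T]`, and a right-continuous adapted process `S` of exchange matrices with deterministic
initial value `S0` all of whose rows are finite (no currency has devalued at time `0`). -/
structure MarketModel (d : ℕ) (Ω : Type*) [mΩ : MeasurableSpace Ω] (T : ℝ) where
  F : Filtration ℝ mΩ
  S : ℝ → Ω → Fin d → Fin d → ℝ≥0∞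
  S0 : Fin d → Fin d → ℝ≥0∞
  T_pos : 0 < T
  rc_F : ∀ t ∈ Set.Ico (0 : ℝ) T, (⨅ u ∈ Set.Ioi t, F u) ≤ F t
  trivial_F0 : ∀ A : Set Ω, MeasurableSet[F 0] A → A = ∅ ∨ A = Set.univ
  adapted_S : ∀ t ∈ Set.Icc (0 : ℝ) T, ∀ i j, Measurable[F t] fun ω => S t ω i j
  rc_S : ∀ ω i j, ∀ t ∈ Set.Ico (0 : ℝ) T,
    Tendsto (fun u => S u ω i j) (nhdsWithin t (Set.Ioi t)) (nhds (S t ω i j))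
  exchange_S : ∀ t ∈ Set.Icc (0 : ℝ) T, ∀ ω, IsExchangeMatrix fun i j => S t ω i j
  init_S : ∀ ω, S 0 ω = S0
  active_S0 : ∀ i, ∑ j, S0 i j < ∞

namespace MarketModel

variable {d : ℕ} {Ω : Type*} [mΩ : MeasurableSpace Ω] {T : ℝ}

/-- Basket-quoted price of the `i`-th currency. -/
def Sbar (M : MarketModel d Ω T) (i : Fin d) (t : ℝ) (ω : Ω) : ℝ≥0∞ :=
  (∑ j, M.S t ω i j)⁻¹

/-- The (random) set of active currencies at time `t`. -/
def active (M : MarketModel d Ω T) (t : ℝ) (ω : Ω) : Finset (Fin d) :=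
  activeFinset fun i j => M.S t ω i j

/-- The payoff of a claim `C` in terms of the basket:
`C̄ = (1/|A(T)|) ∑_{j ∈ A(T)} S̄_j(T) C_j`. -/
def Cbar (M : MarketModel d Ω T) (C : Ω → Fin d → ℝ≥0∞) (ω : Ω) : ℝ≥0∞ :=
  ((M.active T ω).card : ℝ≥0∞)⁻¹ * ∑ j ∈ M.active T ω, M.Sbar j T ω * C ω j

/-- A contingent claim: an `F(T)`-measurable value vector for `S(T)`. -/
def IsClaim (M : MarketModel d Ω T) (C : Ω → Fin d → ℝ≥0∞) : Prop :=
  (∀ i, Measurable fun ω => C ω i) ∧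
  ∀ ω, IsValueVector (fun i j => M.S T ω i j) (C ω)

end MarketModel

/-- A real-valued martingale on the time interval `[0, T]`. -/
def MartingaleOn {Ω : Type*} {mΩ : MeasurableSpace Ω} (F : Filtration ℝ mΩ)
    (Q : Measure Ω) (X : ℝ → Ω → ℝ) (T : ℝ) : Prop :=
  (∀ t ∈ Set.Icc (0 : ℝ) T, StronglyMeasurable[F t] (X t) ∧ Integrable (X t) Q) ∧
  ∀ r ∈ Set.Icc (0 : ℝ) T, ∀ t ∈ Set.Icc (0 : ℝ) T, r ≤ t → Q[X t|F r] =ᵐ[Q] X r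

/-- A real-valued supermartingale on the time interval `[0, T]`. -/
def SupermartingaleOn {Ω : Type*} {mΩ : MeasurableSpace Ω} (F : Filtration ℝ mΩ)
    (Q : Measure Ω) (X : ℝ → Ω → ℝ) (T : ℝ) : Prop :=
  (∀ t ∈ Set.Icc (0 : ℝ) T, StronglyMeasurable[F t] (X t) ∧ Integrable (X t) Q) ∧
  ∀ r ∈ Set.Icc (0 : ℝ) T, ∀ t ∈ Set.Icc (0 : ℝ) T, r ≤ t → Q[X t|F r] ≤ᵐ[Q] X r

/-- A local martingale on `[0, T]`: there is a nondecreasing sequence of stopping times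
with `Q(lim_n τ_n > T) = 1` such that each stopped process is a martingale on `[0, T]`. -/
def LocalMartingaleOn {Ω : Type*} {mΩ : MeasurableSpace Ω} (F : Filtration ℝ mΩ)
    (Q : Measure Ω) (X : ℝ → Ω → ℝ) (T : ℝ) : Prop :=
  ∃ τ : ℕ → Ω → ℝ,
    (∀ n, IsStoppingTime F (fun ω => (τ n ω : WithTop ℝ))) ∧
    (∀ n ω, τ n ω ≤ τ (n + 1) ω) ∧
    (∀ᵐ ω ∂Q, ∃ n, T < τ n ω) ∧
    ∀ n, MartingaleOn F Q (fun t ω => X (min t (τ n ω)) ω) T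

/-- A numéraire-consistent family of probability measures:
`E^{Q_i}[S_{i,j}(t) 1_A] = S_{i,j}(0) Q_j(A ∩ {S_{j,i}(t) > 0})`. -/
def NumeraireConsistent {d : ℕ} {Ω : Type*} [mΩ : MeasurableSpace Ω] {T : ℝ}
    (M : MarketModel d Ω T) (Q : Fin d → Measure Ω) : Prop :=
  (∀ i, IsProbabilityMeasure (Q i)) ∧
  ∀ i j : Fin d, ∀ t ∈ Set.Icc (0 : ℝ) T, ∀ A : Set Ω, MeasurableSet[M.F t] A →
    ∫⁻ ω in A, M.S t ω i j ∂(Q i) = M.S0 i j * Q j (A ∩ {ω | 0 < M.S t ω j i})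

/-- A valuation measure with respect to the basket: the basket-quoted prices form a
`Q̄`-martingale on `[0, T]`. -/
def IsValuationMeasure {d : ℕ} {Ω : Type*} [mΩ : MeasurableSpace Ω] {T : ℝ}
    (M : MarketModel d Ω T) (Qb : Measure Ω) : Prop :=
  IsProbabilityMeasure Qb ∧
  ∀ i, MartingaleOn M.F Qb (fun t ω => (M.Sbar i t ω).toReal) T

/-- The aggregation valuation formula
`E^{Q̄}[C̄ | F(r)] = ∑_{j ∈ A(r)} S̄_j(r) E^{Q_j}[C_j / |A(T)| | F(r)]`. -/
def AggregationFormula {d : ℕ} {Ω : Type*} [mΩ : MeasurableSpace Ω] {T : ℝ}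
    (M : MarketModel d Ω T) (Qb : Measure Ω) (Q : Fin d → Measure Ω)
    (C : Ω → Fin d → ℝ≥0∞) (r : ℝ) : Prop :=
  Qb[fun ω => (M.Cbar C ω).toReal|M.F r] =ᵐ[Qb] fun ω =>
    ∑ j, Set.indicator {ω' | ∑ k, M.S r ω' j k < ∞}
      (fun ω' => (M.Sbar j r ω').toReal *
        ((Q j)[fun ω'' => (C ω'' j / ((M.active T ω'').card : ℝ≥0∞)).toReal|M.F r]) ω') ω

/-- An `[0,∞]`-valued process jumps to zero on `[0, T]`: it is zero at some time `t ∈ [0, T]`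
while its left limit at `t` is strictly positive. -/
def JumpsToZeroOn (X : ℝ → ℝ≥0∞) (T : ℝ) : Prop :=
  ∃ t ∈ Set.Icc (0 : ℝ) T, X t = 0 ∧ 0 < Function.leftLim X t

/-- A `[0,∞]`-valued stopping time. -/
def IsStoppingTimeE {Ω : Type*} {mΩ : MeasurableSpace Ω} (F : Filtration ℝ mΩ)
    (τ : Ω → ℝ≥0∞) : Prop :=
  ∀ t : ℝ, 0 ≤ t → MeasurableSet[F t] {ω | τ ω ≤ ENNReal.ofReal t}

/-- Membership in the σ-algebra `F(τ)` for a `[0,∞]`-valued stopping time `τ`. -/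
def MeasurableSetAtE {Ω : Type*} {mΩ : MeasurableSpace Ω} (F : Filtration ℝ mΩ)
    (τ : Ω → ℝ≥0∞) (A : Set Ω) : Prop :=
  MeasurableSet A ∧ ∀ t : ℝ, 0 ≤ t → MeasurableSet[F t] (A ∩ {ω | τ ω ≤ ENNReal.ofReal t})

/-- A predictable time: a stopping time announced by a nondecreasing sequence of stopping
times converging to it and strictly smaller than it on its finiteness set. -/
def IsPredictableTimeE {Ω : Type*} {mΩ : MeasurableSpace Ω} (F : Filtration ℝ mΩ)
    (σ : Ω → ℝ≥0∞) : Prop :=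
  IsStoppingTimeE F σ ∧
  ∃ a : ℕ → Ω → ℝ≥0∞,
    (∀ n, IsStoppingTimeE F (a n)) ∧
    (∀ n ω, a n ω ≤ a (n + 1) ω) ∧
    (∀ ω, (⨆ n, a n ω) = σ ω) ∧
    ∀ n ω, 0 < σ ω → σ ω < ∞ → a n ω < σ ω

/-- No Obvious Devaluations: for every currency `i` and stopping time `τ`,
`P(i ∈ A(T) | F(τ)) > 0` almost surely on `{τ < ∞} ∩ {i ∈ A(τ)}`, formulated via
`F(τ)`-measurable subsets of that event. -/
def NOD {d : ℕ} {Ω : Type*} [mΩ : MeasurableSpace Ω] {T : ℝ}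
    (M : MarketModel d Ω T) (P : Measure Ω) : Prop :=
  ∀ i : Fin d, ∀ τ : Ω → ℝ≥0∞, IsStoppingTimeE M.F τ →
    ∀ A : Set Ω, MeasurableSetAtE M.F τ A →
      (∀ ω ∈ A, τ ω < ∞ ∧ ∑ j, M.S (τ ω).toReal ω i j < ∞) →
      0 < P A → 0 < P (A ∩ {ω | ∑ j, M.S T ω i j < ∞})

/-- For an exchange matrix `s` with basket-quoted prices
`s̄ i = (∑ j, s i j)⁻¹`, whenever the fraction `s̄ j / s̄ i` is well-defined
(not `0/0` and not `∞/∞`), one has `s i j = s̄ j / s̄ i`. -/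
theorem exchangeMatrix_eq_basket_ratio {d : ℕ} (hd : 0 < d)
    (s : Fin d → Fin d → ℝ≥0∞) (hs : IsExchangeMatrix s)
    (sbar : Fin d → ℝ≥0∞) (hsbar : ∀ i, sbar i = (∑ j, s i j)⁻¹) :
    ∀ i j, ¬(sbar j = 0 ∧ sbar i = 0) → ¬(sbar j = ∞ ∧ sbar i = ∞) →
      s i j = sbar j / sbar i := by
  have hle : ∀ i k, s i k ≤ ∑ m, s i m := fun i k =>
    Finset.single_le_sum (f := s i) (fun m _ => zero_le) (Finset.mem_univ k)
  have hsum : ∀ i, (1 : ℝ≥0∞) ≤ ∑ k, s i k := fun i => by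
    have := hle i i; rwa [hs.diag i] at this
  have hzero : ∀ i j, ∑ k, s i k ≠ ∞ → ∑ k, s j k = ∞ → s i j = 0 := by
    intro i j hi hj
    by_contra h
    obtain ⟨k, -, hk⟩ := ENNReal.sum_eq_top.mp hj
    have hij_ne_top : s i j ≠ ∞ := fun h' => hi (top_le_iff.mp (h' ▸ hle i j))
    have hdef : DefinedProd (s i j) (s j k) :=
      ⟨fun hc => h hc.1, fun hc => hij_ne_top hc.1⟩
    have hik := hs.consistent i j k hdef
    rw [hk, ENNReal.mul_top h] at hik
    exact hi (top_le_iff.mp (hik ▸ hle i k))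
  intro i j h0 _
  by_cases hi : ∑ k, s i k = ∞ <;> by_cases hj : ∑ k, s j k = ∞
  · exact absurd ⟨by simp [hsbar, hj], by simp [hsbar, hi]⟩ h0
  · -- row i infinite, row j finite: s i j = ∞
    have hji : s j i = 0 := hzero j i hj hi
    have hij : s i j = ∞ := by
      by_contra h
      have hdef : DefinedProd (s i j) (s j i) :=
        ⟨fun hc => by simp [hji] at hc, fun hc => h hc.1⟩
      have := hs.consistent i j i hdef
      rw [hji, mul_zero, hs.diag i] at this
      exact zero_ne_one this
    have hsj : sbar j ≠ 0 := by
      rw [hsbar]; exact ENNReal.inv_ne_zero.mpr hj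
    rw [hij, hsbar i, hi, ENNReal.inv_top, ENNReal.div_zero hsj]
  · have hij : s i j = 0 := hzero i j hi hj
    rw [hij, hsbar j, hj, ENNReal.inv_top, ENNReal.zero_div]
  · -- both finite
    have key : ∑ k, s i k = s i j * ∑ k, s j k := by
      rw [Finset.mul_sum]
      refine Finset.sum_congr rfl fun k _ => ?_
      refine (hs.consistent i j k ?_).symm
      exact ⟨fun hc => hj (top_le_iff.mp (hc.2 ▸ hle j k)),
        fun hc => hi (top_le_iff.mp (hc.1 ▸ hle i j))⟩
    have h1 : (∑ k, s j k) ≠ 0 := (zero_lt_one.trans_le (hsum j)).ne'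
    rw [hsbar, hsbar, div_eq_mul_inv, inv_inv, key, mul_comm (s i j),
      ← mul_assoc, ENNReal.inv_mul_cancel h1 hj, one_mul]
end
end

section
/- Suppose (Q_i)_{i=1}^d is a numéraire-consistent family of probability measures. Then for all i,j and every stopping time τ with values in [0,T]: the stopped process S_{i,j}^τ is a Q_i-martingale if and only if Q_j(S_{j,i}(τ) > 0) = 1; moreover, in that case the restriction of Q_j to F(τ) is absolutely continuous with respect to the restriction of Q_i to F(τ) with density dQ_j/dQ_i|_{F(τ)} = S_{j,i}(0)·S_{i,j}(τ). In particular (taking τ = T), S_{i,j} is a true Q_i-martingale if and only if Q_j(S_{j,i}(T) > 0) = 1. -/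
open MeasureTheory Filter Set Function
open scoped ENNReal

noncomputable section

namespace ZZ

variable {Ω : Type*}

/-- dyadic discretization of a random time -/
def disc (r : ℝ) (m : ℕ) (σ : Ω → ℝ) (ω : Ω) : ℝ :=
  r * ⌈(2 : ℝ) ^ m * σ ω / r⌉₊ / 2 ^ m

/-- the grid of values of `disc r m` -/
def dgrid (r : ℝ) (m : ℕ) : Finset ℝ :=
  (Finset.range (2 ^ m + 1)).image fun k : ℕ => r * k / 2 ^ m

variable {σ : Ω → ℝ} {r : ℝ} {m n : ℕ} {ω : Ω}

lemma ceil_le_pow (hr : 0 ≤ r) (h2 : σ ω ≤ r) :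
    ⌈(2 : ℝ) ^ m * σ ω / r⌉₊ ≤ 2 ^ m := by
  rcases eq_or_lt_of_le hr with h | h
  · simp [← h]
  · rw [Nat.ceil_le]
    push_cast
    rw [div_le_iff₀ h]
    calc (2:ℝ) ^ m * σ ω ≤ 2 ^ m * r := by
          exact mul_le_mul_of_nonneg_left h2 (by positivity)
      _ = 2 ^ m * r := rfl

lemma disc_mem_dgrid (hr : 0 ≤ r) (h2 : σ ω ≤ r) : disc r m σ ω ∈ dgrid r m := by
  refine Finset.mem_image.2 ⟨⌈(2 : ℝ) ^ m * σ ω / r⌉₊, ?_, rfl⟩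
  exact Finset.mem_range.2 (Nat.lt_succ_of_le (ceil_le_pow hr h2))

lemma dgrid_mem_Icc {T x : ℝ} (hr : 0 ≤ r) (hrT : r ≤ T) (hx : x ∈ dgrid r m) :
    x ∈ Set.Icc (0 : ℝ) T := by
  obtain ⟨k, hk, rfl⟩ := Finset.mem_image.1 hx
  have hk' : (k : ℝ) ≤ 2 ^ m := by
    have := Nat.lt_succ_iff.1 (Finset.mem_range.1 hk)
    calc (k:ℝ) ≤ (2 ^ m : ℕ) := by exact_mod_cast this
      _ = 2 ^ m := by push_cast; ring
  constructor
  · positivity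
  · calc r * k / 2 ^ m ≤ r * 2 ^ m / 2 ^ m := by gcongr
      _ = r := by field_simp
      _ ≤ T := hrT

lemma le_disc (hr : 0 ≤ r) (h1 : 0 ≤ σ ω) (h2 : σ ω ≤ r) : σ ω ≤ disc r m σ ω := by
  rcases eq_or_lt_of_le hr with h | h
  · have : σ ω = 0 := le_antisymm (h ▸ h2) h1
    simp [disc, this, ← h]
  · have hk : (2:ℝ) ^ m * σ ω / r ≤ ⌈(2 : ℝ) ^ m * σ ω / r⌉₊ := Nat.le_ceil _
    rw [div_le_iff₀ h] at hk
    unfold disc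
    rw [le_div_iff₀ (by positivity : (0:ℝ) < 2 ^ m)]
    nlinarith [hk]

lemma disc_le_add (hr : 0 ≤ r) (h1 : 0 ≤ σ ω) (h2 : σ ω ≤ r) :
    disc r m σ ω ≤ σ ω + r / 2 ^ m := by
  rcases eq_or_lt_of_le hr with h | h
  · have : σ ω = 0 := le_antisymm (h ▸ h2) h1
    simp [disc, this, ← h]
  · have hk : (⌈(2 : ℝ) ^ m * σ ω / r⌉₊ : ℝ) < 2 ^ m * σ ω / r + 1 :=
      Nat.ceil_lt_add_one (by positivity)
    unfold disc
    rw [div_le_iff₀ (by positivity : (0:ℝ) < 2 ^ m)]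
    have h2m : (0:ℝ) < 2 ^ m := by positivity
    have hmul := mul_lt_mul_of_pos_left hk h
    rw [mul_add, mul_one, mul_div_cancel₀ _ h.ne'] at hmul
    have hdiv : r / 2 ^ m * 2 ^ m = r := div_mul_cancel₀ _ h2m.ne'
    nlinarith [hmul, hdiv]

lemma disc_le_r (hr : 0 ≤ r) (h2 : σ ω ≤ r) : disc r m σ ω ≤ r := by
  have hk := ceil_le_pow (m := m) hr h2
  unfold disc
  rw [div_le_iff₀ (by positivity : (0:ℝ) < 2 ^ m)]
  have : (⌈(2 : ℝ) ^ m * σ ω / r⌉₊ : ℝ) ≤ 2 ^ m := by exact_mod_cast hk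
  nlinarith [this]

lemma disc_nonneg (hr : 0 ≤ r) : 0 ≤ disc r m σ ω := by
  unfold disc; positivity

lemma disc_succ_le (hr : 0 ≤ r) : disc r (m + 1) σ ω ≤ disc r m σ ω := by
  rcases eq_or_lt_of_le hr with h | h
  · simp [disc, ← h]
  · have h1 : ⌈(2 : ℝ) ^ (m+1) * σ ω / r⌉₊ ≤ 2 * ⌈(2 : ℝ) ^ m * σ ω / r⌉₊ := by
      rw [Nat.ceil_le]
      push_cast
      have := Nat.le_ceil ((2 : ℝ) ^ m * σ ω / r)
      calc (2:ℝ) ^ (m+1) * σ ω / r = 2 * ((2:ℝ) ^ m * σ ω / r) := by ring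
        _ ≤ 2 * ⌈(2 : ℝ) ^ m * σ ω / r⌉₊ := by linarith
    unfold disc
    rw [div_le_div_iff₀ (by positivity) (by positivity)]
    have h1' : (⌈(2 : ℝ) ^ (m+1) * σ ω / r⌉₊ : ℝ) ≤ 2 * ⌈(2 : ℝ) ^ m * σ ω / r⌉₊ := by
      exact_mod_cast h1
    have hc : (0:ℝ) ≤ (⌈(2 : ℝ) ^ m * σ ω / r⌉₊ : ℝ) := by positivity
    have hpow : (2:ℝ) ^ (m+1) = 2 * 2 ^ m := by ring
    have h2m : (0:ℝ) < 2 ^ m := by positivity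
    rw [pow_succ] at h1' ⊢
    nlinarith [mul_le_mul_of_nonneg_right (mul_le_mul_of_nonneg_left h1' hr) h2m.le]

lemma disc_antitone (hr : 0 ≤ r) (hmn : m ≤ n) : disc r n σ ω ≤ disc r m σ ω := by
  induction n, hmn using Nat.le_induction with
  | base => exact le_refl _
  | succ n hmn ih => exact le_trans (disc_succ_le hr) ih

lemma tendsto_disc (hr : 0 ≤ r) (h1 : 0 ≤ σ ω) (h2 : σ ω ≤ r) :
    Tendsto (fun m => disc r m σ ω) atTop (nhds (σ ω)) := by
  have hup : Tendsto (fun m : ℕ => σ ω + r / 2 ^ m) atTop (nhds (σ ω + 0)) := by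
    refine tendsto_const_nhds.add ?_
    have h := tendsto_pow_atTop_nhds_zero_of_lt_one
      (by norm_num : (0:ℝ) ≤ 1/2) (by norm_num : (1/2 : ℝ) < 1)
    have := h.const_mul r
    simpa [div_pow, div_eq_mul_inv, mul_comm, inv_pow] using this
  rw [add_zero] at hup
  exact tendsto_of_tendsto_of_tendsto_of_le_of_le tendsto_const_nhds hup
    (fun m => le_disc hr h1 h2) (fun m => disc_le_add hr h1 h2)

end ZZ

namespace ZZ
open MeasureTheory Filter Set Function
open scoped ENNReal

variable {d : ℕ} {Ω : Type*} [mΩ : MeasurableSpace Ω] {T : ℝ} {M : MarketModel d Ω T}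
  {Q : Fin d → Measure Ω}

lemma mem0T (M : MarketModel d Ω T) : (0:ℝ) ∈ Set.Icc (0:ℝ) T := ⟨le_rfl, M.T_pos.le⟩

lemma TmemT (M : MarketModel d Ω T) : T ∈ Set.Icc (0:ℝ) T := ⟨M.T_pos.le, le_rfl⟩

/-- a real-valued stopping time. -/
def RST (F : Filtration ℝ mΩ) (σ : Ω → ℝ) : Prop :=
  ∀ t : ℝ, MeasurableSet[F t] {ω | σ ω ≤ t}

lemma RST.measurableSet_le {F : Filtration ℝ mΩ} {σ : Ω → ℝ} (hσ : RST F σ) (i : ℝ) :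
    MeasurableSet[F i] {ω | σ ω ≤ i} := hσ i

lemma RST_const (F : Filtration ℝ mΩ) (c : ℝ) : RST F (fun _ => c) :=
  fun _ => MeasurableSet.const _

lemma RST.min_const {F : Filtration ℝ mΩ} {σ : Ω → ℝ} (hσ : RST F σ) (c : ℝ) :
    RST F (fun ω => min (σ ω) c) := by
  intro i
  have : {ω | min (σ ω) c ≤ i} = {ω | σ ω ≤ i} ∪ {_ω | c ≤ i} := by
    ext ω; simp [min_le_iff]
  rw [this]
  exact (hσ i).union (MeasurableSet.const _)

/-- the σ-algebra of a real-valued stopping time. -/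
def RST.measurableSpace {F : Filtration ℝ mΩ} {σ : Ω → ℝ} (hσ : RST F σ) :
    MeasurableSpace Ω where
  MeasurableSet' s := ∀ i : ℝ, MeasurableSet[F i] (s ∩ {ω | σ ω ≤ i})
  measurableSet_empty i := (Set.empty_inter {ω | σ ω ≤ i}).symm ▸ @MeasurableSet.empty _ (F i)
  measurableSet_compl s hs i := by
    rw [(_ : sᶜ ∩ {ω | σ ω ≤ i} = (sᶜ ∪ {ω | σ ω ≤ i}ᶜ) ∩ {ω | σ ω ≤ i})]
    · refine MeasurableSet.inter ?_ ?_
      · rw [← Set.compl_inter]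
        exact (hs i).compl
      · exact hσ i
    · rw [Set.union_inter_distrib_right]
      simp only [Set.compl_inter_self, Set.union_empty]
  measurableSet_iUnion s hs i := by
    rw [forall_swap] at hs
    rw [Set.iUnion_inter]
    exact MeasurableSet.iUnion (hs i)

lemma RST.measurableSet {F : Filtration ℝ mΩ} {σ : Ω → ℝ} (hσ : RST F σ) (s : Set Ω) :
    MeasurableSet[hσ.measurableSpace] s ↔ ∀ i : ℝ, MeasurableSet[F i] (s ∩ {ω | σ ω ≤ i}) :=
  Iff.rfl

/-- `{disc = x}` is measurable at time `x`. -/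
lemma stopping_disc_eq {σ : Ω → ℝ} (hσ : RST M.F σ) {r : ℝ} (hr : 0 ≤ r)
    {m : ℕ} {x : ℝ} (hx : x ∈ dgrid r m) :
    MeasurableSet[M.F x] {ω | disc r m σ ω = x} := by
  rcases eq_or_lt_of_le hr with h0 | h0
  · -- r = 0
    have hx0 : x = 0 := by
      obtain ⟨k, _, rfl⟩ := Finset.mem_image.1 hx
      simp [← h0]
    have : {ω | disc r m σ ω = x} = Set.univ := by
      ext ω; simp [disc, ← h0, hx0]
    rw [this]
    exact MeasurableSet.univ
  · obtain ⟨k₀, _, rfl⟩ := Finset.mem_image.1 hx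
    have h2m : (0:ℝ) < 2 ^ m := by positivity
    have hinj : ∀ ω, disc r m σ ω = r * k₀ / 2 ^ m ↔ ⌈(2:ℝ) ^ m * σ ω / r⌉₊ = k₀ := by
      intro ω
      unfold disc
      constructor
      · intro h
        have h2 : r * (⌈(2:ℝ) ^ m * σ ω / r⌉₊ : ℝ) = r * (k₀:ℝ) := by
          have := congrArg (· * (2:ℝ) ^ m) h
          simpa [div_mul_cancel₀, h2m.ne'] using this
        have : (⌈(2:ℝ) ^ m * σ ω / r⌉₊ : ℝ) = (k₀:ℝ) := mul_left_cancel₀ h0.ne' h2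
        exact_mod_cast this
      · intro h; rw [h]
    rcases Nat.eq_zero_or_pos k₀ with hk0 | hk0
    · subst hk0
      have : {ω | disc r m σ ω = r * (0:ℕ) / 2 ^ m} = {ω | σ ω ≤ 0} := by
        ext ω
        rw [Set.mem_setOf_eq, hinj ω, Nat.ceil_eq_zero, Set.mem_setOf_eq]
        rw [div_nonpos_iff]
        constructor
        · rintro (⟨h1, h2⟩ | ⟨h1, h2⟩)
          · linarith [h0]
          · nlinarith [h2m]
        · intro h; right; exact ⟨by nlinarith [h2m], hr⟩
      rw [this]
      have h00 : (r * ((0:ℕ):ℝ) / 2 ^ m) = 0 := by simp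
      rw [h00]
      exact hσ.measurableSet_le 0
    · have hk0' : k₀ ≠ 0 := hk0.ne'
      have hset : {ω | disc r m σ ω = r * k₀ / 2 ^ m} =
          {ω | σ ω ≤ r * k₀ / 2 ^ m} \ {ω | σ ω ≤ r * (k₀ - 1 : ℕ) / 2 ^ m} := by
        ext ω
        rw [Set.mem_setOf_eq, hinj ω, Set.mem_diff, Set.mem_setOf_eq, Set.mem_setOf_eq]
        rw [Nat.ceil_eq_iff hk0']
        constructor
        · rintro ⟨h1, h2⟩
          rw [div_le_iff₀ h0] at h2
          constructor
          · rw [le_div_iff₀ h2m]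
            nlinarith [h2]
          · intro hcon
            rw [le_div_iff₀ h2m] at hcon
            have : (2:ℝ) ^ m * σ ω / r ≤ ((k₀ - 1 : ℕ) : ℝ) := by
              rw [div_le_iff₀ h0]
              nlinarith [hcon]
            linarith [this, h1]
        · rintro ⟨h1, h2⟩
          push_neg at h2
          rw [div_lt_iff₀ h2m] at h2
          rw [le_div_iff₀ h2m] at h1
          constructor
          · rw [lt_div_iff₀ h0]
            nlinarith [h2]
          · rw [div_le_iff₀ h0]
            nlinarith [h1]
      rw [hset]
      refine MeasurableSet.diff (hσ.measurableSet_le _) ?_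
      refine M.F.mono ?_ _ (hσ.measurableSet_le _)
      gcongr
      all_goals first | exact hr | exact h2m.le | exact_mod_cast Nat.sub_le k₀ 1

/-- intersection with a set from the stopping σ-algebra. -/
lemma stopping_disc_inter {σ : Ω → ℝ} (hσ : RST M.F σ) {r : ℝ} (hr : 0 ≤ r)
    (h1 : ∀ ω, 0 ≤ σ ω) (h2 : ∀ ω, σ ω ≤ r)
    {A : Set Ω} (hA : MeasurableSet[hσ.measurableSpace] A)
    {m : ℕ} {x : ℝ} (hx : x ∈ dgrid r m) :
    MeasurableSet[M.F x] (A ∩ {ω | disc r m σ ω = x}) := by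
  have : A ∩ {ω | disc r m σ ω = x} = (A ∩ {ω | σ ω ≤ x}) ∩ {ω | disc r m σ ω = x} := by
    ext ω
    simp only [Set.mem_inter_iff, Set.mem_setOf_eq, and_assoc]
    constructor
    · rintro ⟨hA', hd⟩
      exact ⟨hA', by rw [← hd]; exact le_disc hr (h1 ω) (h2 ω), hd⟩
    · rintro ⟨hA', _, hd⟩; exact ⟨hA', hd⟩
  rw [this]
  exact (hA x).inter (stopping_disc_eq hσ hr hx)

/-- pointwise convergence of the stopped exchange rates along discretizations. -/
lemma tendsto_S_disc {σ : Ω → ℝ} {r : ℝ} (hr : r ∈ Set.Icc (0:ℝ) T)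
    (hσr : ∀ ω, σ ω ∈ Set.Icc 0 r) (ω : Ω) (a b : Fin d) :
    Tendsto (fun m => M.S (disc r m σ ω) ω a b) atTop (nhds (M.S (σ ω) ω a b)) := by
  by_cases hconst : ∃ m₀, disc r m₀ σ ω = σ ω
  · obtain ⟨m₀, hm₀⟩ := hconst
    apply tendsto_atTop_of_eventually_const (i₀ := m₀)
    intro m hm
    have hle : disc r m σ ω ≤ σ ω := hm₀ ▸ disc_antitone hr.1 hm
    have hge : σ ω ≤ disc r m σ ω := le_disc hr.1 (hσr ω).1 (hσr ω).2
    rw [le_antisymm hle hge]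
  · push_neg at hconst
    have hlt : ∀ m, σ ω < disc r m σ ω := fun m =>
      lt_of_le_of_ne (le_disc hr.1 (hσr ω).1 (hσr ω).2) (Ne.symm (hconst m))
    have hσT : σ ω < T := by
      have := hlt 0
      have h2 := disc_le_r (m := 0) hr.1 (hσr ω).2
      linarith [hr.2]
    have hrc := M.rc_S ω a b (σ ω) ⟨(hσr ω).1, hσT⟩
    apply hrc.comp
    rw [tendsto_nhdsWithin_iff]
    refine ⟨tendsto_disc hr.1 (hσr ω).1 (hσr ω).2, ?_⟩
    exact Filter.Eventually.of_forall fun m => hlt m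

end ZZ

namespace ZZ
open MeasureTheory Filter Set Function
open scoped ENNReal

variable {d : ℕ} {Ω : Type*} [mΩ : MeasurableSpace Ω] {T : ℝ} {M : MarketModel d Ω T}
  {Q : Fin d → Measure Ω}

lemma nonempty_of_NC (hQ : NumeraireConsistent M Q) (a : Fin d) : Nonempty Ω := by
  by_contra h
  rw [not_nonempty_iff] at h
  haveI := hQ.1 a
  have h1 : (Q a) Set.univ = 1 := measure_univ
  rw [Set.univ_eq_empty_iff.2 h, measure_empty] at h1
  exact zero_ne_one h1

lemma S0_lt_top (M : MarketModel d Ω T) (a b : Fin d) : M.S0 a b < ∞ :=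
  lt_of_le_of_lt (Finset.single_le_sum (fun c _ => zero_le) (Finset.mem_univ b))
    (M.active_S0 a)

lemma S0_exchange (hΩ : Nonempty Ω) (M : MarketModel d Ω T) : IsExchangeMatrix M.S0 := by
  obtain ⟨ω⟩ := hΩ
  have h := M.exchange_S 0 (mem0T M) ω
  have heq : (fun i j => M.S 0 ω i j) = M.S0 := by
    funext i j; rw [M.init_S ω]
  rwa [heq] at h

lemma S0_mul_symm (hΩ : Nonempty Ω) (M : MarketModel d Ω T) (a b : Fin d) :
    M.S0 a b * M.S0 b a = 1 := by
  have hE := S0_exchange hΩ M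
  have h := hE.consistent a b a ⟨?_, ?_⟩
  · rw [h, hE.diag]
  · rintro ⟨_, h2⟩; exact (S0_lt_top M b a).ne h2
  · rintro ⟨h1, _⟩; exact (S0_lt_top M a b).ne h1

lemma S0_ne_zero (hΩ : Nonempty Ω) (M : MarketModel d Ω T) (a b : Fin d) : M.S0 a b ≠ 0 := by
  intro h
  have := S0_mul_symm hΩ M a b
  rw [h, zero_mul] at this
  exact zero_ne_one this

/-- Dichotomy: `S i j = ∞ ↔ S j i = 0`. -/
lemma S_top_iff {t : ℝ} (ht : t ∈ Set.Icc (0:ℝ) T) (ω : Ω) (a b : Fin d) :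
    M.S t ω a b = ∞ ↔ M.S t ω b a = 0 := by
  have hE := M.exchange_S t ht ω
  constructor
  · intro h
    by_contra h0
    have hc := hE.consistent b a b ⟨?_, ?_⟩
    · rw [hE.diag] at hc
      rw [h, ENNReal.mul_top h0] at hc
      exact (ENNReal.one_ne_top hc.symm).elim
    · rintro ⟨h1, _⟩; exact h0 h1
    · rintro ⟨_, h2⟩; rw [h] at h2; exact (ENNReal.top_ne_zero h2).elim
  · intro h
    by_contra htop
    have hc := hE.consistent a b a ⟨?_, ?_⟩
    · rw [hE.diag] at hc
      rw [h, mul_zero] at hc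
      exact zero_ne_one hc
    · rintro ⟨_, h2⟩; rw [h] at h2; exact (ENNReal.zero_ne_top h2).elim
    · rintro ⟨h1, _⟩; exact htop h1

lemma meas_S {t : ℝ} (ht : t ∈ Set.Icc (0:ℝ) T) (a b : Fin d) :
    Measurable[M.F t] fun ω => M.S t ω a b := M.adapted_S t ht a b

/-- deterministic Fact A: `Q a (S t a b = ∞) = 0`. -/
lemma null_S_top (hQ : NumeraireConsistent M Q) {t : ℝ} (ht : t ∈ Set.Icc (0:ℝ) T)
    (a b : Fin d) : Q a {ω | M.S t ω a b = ∞} = 0 := by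
  have hΩ := nonempty_of_NC hQ a
  set A := {ω | M.S t ω b a = 0} with hA
  have hAm : MeasurableSet[M.F t] A := (meas_S ht b a) (measurableSet_singleton 0)
  have hNC := hQ.2 a b t ht A hAm
  have hempty : A ∩ {ω | 0 < M.S t ω b a} = ∅ := by
    ext ω; simp only [Set.mem_inter_iff, Set.mem_setOf_eq, Set.mem_empty_iff_false, iff_false]
    rintro ⟨h1, h2⟩; rw [h1] at h2; exact lt_irrefl 0 h2
  rw [hempty, measure_empty, mul_zero] at hNC
  have hcongr : ∫⁻ ω in A, M.S t ω a b ∂(Q a) = ∫⁻ _ in A, ∞ ∂(Q a) := by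
    refine setLIntegral_congr_fun (M.F.le t _ hAm) ?_
    exact fun ω hω => (S_top_iff ht ω a b).2 hω
  rw [hcongr, setLIntegral_const] at hNC
  have hA0 : Q a A = 0 := by
    by_contra h
    rw [ENNReal.top_mul h] at hNC
    exact ENNReal.top_ne_zero hNC
  have hsub : {ω | M.S t ω a b = ∞} = A := by
    ext ω; exact S_top_iff ht ω a b
  rw [hsub]
  exact hA0

/-- deterministic absorption: zero at `x` stays zero at `y ≥ x`, a.s. under `Q b`. -/
lemma det_absorb (hQ : NumeraireConsistent M Q) {x y : ℝ} (hx : x ∈ Set.Icc (0:ℝ) T)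
    (hy : y ∈ Set.Icc (0:ℝ) T) (hxy : x ≤ y) (a b : Fin d) :
    Q b ({ω | M.S x ω b a = 0} ∩ {ω | 0 < M.S y ω b a}) = 0 := by
  set A := {ω | M.S x ω b a = 0} with hA
  have hAm : MeasurableSet[M.F y] A :=
    M.F.mono hxy _ ((meas_S hx b a) (measurableSet_singleton 0))
  have hNC := hQ.2 a b y hy A hAm
  have hnull : Q a A = 0 := by
    have : A = {ω | M.S x ω a b = ∞} := by
      ext ω; exact (S_top_iff hx ω a b).symm
    rw [this]
    exact null_S_top hQ hx a b
  rw [setLIntegral_measure_zero _ _ hnull] at hNC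
  have := hNC.symm
  rcases mul_eq_zero.1 this with h | h
  · exact absurd h (S0_ne_zero (nonempty_of_NC hQ a) M a b)
  · exact h

/-- NC identity at a finitely-valued random time. -/
lemma discrete_NC (hQ : NumeraireConsistent M Q) (a b : Fin d) (σ' : Ω → ℝ) (D : Finset ℝ)
    (hrange : ∀ ω, σ' ω ∈ D) (hD : ∀ x ∈ D, x ∈ Set.Icc (0:ℝ) T) {A : Set Ω}
    (hA : ∀ x ∈ D, MeasurableSet[M.F x] (A ∩ {ω | σ' ω = x})) :
    ∫⁻ ω in A, M.S (σ' ω) ω a b ∂(Q a)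
      = M.S0 a b * Q b (A ∩ {ω | 0 < M.S (σ' ω) ω b a}) := by
  have hAmb : ∀ x ∈ D, MeasurableSet (A ∩ {ω | σ' ω = x}) :=
    fun x hx => M.F.le x _ (hA x hx)
  have hAm : MeasurableSet A := by
    have : A = ⋃ x ∈ D, (A ∩ {ω | σ' ω = x}) := by
      ext ω
      simp only [Set.mem_iUnion, Set.mem_inter_iff, Set.mem_setOf_eq]
      constructor
      · intro h; exact ⟨σ' ω, hrange ω, h, rfl⟩
      · rintro ⟨x, _, h, _⟩; exact h
    rw [this]
    exact MeasurableSet.biUnion D.countable_toSet hAmb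
  have hfun : A.indicator (fun ω => M.S (σ' ω) ω a b)
      = fun ω => ∑ x ∈ D, (A ∩ {ω' | σ' ω' = x}).indicator (fun ω' => M.S x ω' a b) ω := by
    funext ω
    by_cases hω : ω ∈ A
    · rw [Set.indicator_of_mem hω]
      rw [Finset.sum_eq_single_of_mem (σ' ω) (hrange ω)]
      · rw [Set.indicator_of_mem (show ω ∈ A ∩ {ω' | σ' ω' = σ' ω} from ⟨hω, rfl⟩)]
      · intro x _ hne
        apply Set.indicator_of_notMem
        rintro ⟨_, h⟩
        exact hne (h ▸ rfl)
    · rw [Set.indicator_of_notMem hω]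
      symm
      apply Finset.sum_eq_zero
      intro x _
      apply Set.indicator_of_notMem
      rintro ⟨h, _⟩
      exact hω h
  have hmeas : ∀ x ∈ D, Measurable fun ω' => M.S x ω' a b :=
    fun x hx => (meas_S (hD x hx) a b).mono (M.F.le x) le_rfl
  calc ∫⁻ ω in A, M.S (σ' ω) ω a b ∂(Q a)
      = ∫⁻ ω, A.indicator (fun ω => M.S (σ' ω) ω a b) ω ∂(Q a) := by
        rw [lintegral_indicator hAm]
    _ = ∫⁻ ω, ∑ x ∈ D, (A ∩ {ω' | σ' ω' = x}).indicator (fun ω' => M.S x ω' a b) ω ∂(Q a) := by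
        rw [hfun]
    _ = ∑ x ∈ D, ∫⁻ ω, (A ∩ {ω' | σ' ω' = x}).indicator (fun ω' => M.S x ω' a b) ω ∂(Q a) := by
        refine lintegral_finset_sum D fun x hx => ?_
        exact (hmeas x hx).indicator (hAmb x hx)
    _ = ∑ x ∈ D, ∫⁻ ω in A ∩ {ω' | σ' ω' = x}, M.S x ω a b ∂(Q a) := by
        refine Finset.sum_congr rfl fun x hx => ?_
        rw [lintegral_indicator (hAmb x hx)]
    _ = ∑ x ∈ D, M.S0 a b * Q b ((A ∩ {ω' | σ' ω' = x}) ∩ {ω | 0 < M.S x ω b a}) := by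
        refine Finset.sum_congr rfl fun x hx => ?_
        exact hQ.2 a b x (hD x hx) _ (hA x hx)
    _ = M.S0 a b * ∑ x ∈ D, Q b ((A ∩ {ω' | σ' ω' = x}) ∩ {ω | 0 < M.S x ω b a}) := by
        rw [Finset.mul_sum]
    _ = M.S0 a b * Q b (⋃ x ∈ D, ((A ∩ {ω' | σ' ω' = x}) ∩ {ω | 0 < M.S x ω b a})) := by
        congr 1
        rw [measure_biUnion_finset]
        · intro x hx y hy hxy
          simp only [Function.onFun]
          refine Set.disjoint_left.2 ?_
          rintro ω ⟨⟨_, h1⟩, _⟩ ⟨⟨_, h2⟩, _⟩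
          exact hxy (h1 ▸ h2 ▸ rfl)
        · intro x hx
          refine (hAmb x hx).inter ?_
          exact measurableSet_lt measurable_const
            ((meas_S (hD x hx) b a).mono (M.F.le x) le_rfl)
    _ = M.S0 a b * Q b (A ∩ {ω | 0 < M.S (σ' ω) ω b a}) := by
        have hsets : (⋃ x ∈ D, ((A ∩ {ω' | σ' ω' = x}) ∩ {ω | 0 < M.S x ω b a}))
            = A ∩ {ω | 0 < M.S (σ' ω) ω b a} := by
          ext ω
          simp only [Set.mem_iUnion, Set.mem_inter_iff, Set.mem_setOf_eq]
          constructor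
          · rintro ⟨x, _, ⟨⟨hωA, hσx⟩, hpos⟩⟩
            exact ⟨hωA, hσx ▸ hpos⟩
          · rintro ⟨hωA, hpos⟩
            exact ⟨σ' ω, hrange ω, ⟨⟨hωA, rfl⟩, hpos⟩⟩
        rw [hsets]

/-- absorption between two finitely-valued ordered random times. -/
lemma absorb_pair (hQ : NumeraireConsistent M Q) (a b : Fin d) {ρ₁ ρ₂ : Ω → ℝ}
    {D₁ D₂ : Finset ℝ} (h₁ : ∀ ω, ρ₁ ω ∈ D₁) (h₂ : ∀ ω, ρ₂ ω ∈ D₂)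
    (hD₁ : ∀ x ∈ D₁, x ∈ Set.Icc (0:ℝ) T) (hD₂ : ∀ x ∈ D₂, x ∈ Set.Icc (0:ℝ) T)
    (hle : ∀ ω, ρ₁ ω ≤ ρ₂ ω) :
    Q b ({ω | M.S (ρ₁ ω) ω b a = 0} ∩ {ω | 0 < M.S (ρ₂ ω) ω b a}) = 0 := by
  have hsub : {ω | M.S (ρ₁ ω) ω b a = 0} ∩ {ω | 0 < M.S (ρ₂ ω) ω b a}
      ⊆ ⋃ p ∈ (D₁ ×ˢ D₂ : Finset (ℝ × ℝ)),
        ({ω | ρ₁ ω = p.1} ∩ {ω | ρ₂ ω = p.2} ∩ ({ω | M.S p.1 ω b a = 0}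
          ∩ {ω | 0 < M.S p.2 ω b a})) := by
    rintro ω ⟨hz, hp⟩
    refine Set.mem_biUnion (Finset.mk_mem_product (h₁ ω) (h₂ ω)) ?_
    exact ⟨⟨rfl, rfl⟩, hz, hp⟩
  refine measure_mono_null hsub ?_
  refine (measure_biUnion_null_iff (D₁ ×ˢ D₂).countable_toSet).2 ?_
  rintro ⟨x, y⟩ hp
  rw [Finset.mem_coe, Finset.mem_product] at hp
  by_cases hxy : x ≤ y
  · refine measure_mono_null ?_ (det_absorb hQ (hD₁ x hp.1) (hD₂ y hp.2) hxy a b)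
    rintro ω ⟨⟨_, _⟩, hrest⟩
    exact hrest
  · have hemp : {ω | ρ₁ ω = x} ∩ {ω | ρ₂ ω = y}
        ∩ ({ω | M.S x ω b a = 0} ∩ {ω | 0 < M.S y ω b a}) = (∅ : Set Ω) := by
      ext ω
      simp only [Set.mem_inter_iff, Set.mem_setOf_eq, Set.mem_empty_iff_false, iff_false]
      rintro ⟨⟨hh1, hh2⟩, _⟩
      exact hxy (hh1 ▸ hh2 ▸ hle ω)
    rw [hemp, measure_empty]

end ZZ

namespace ZZ
open MeasureTheory Filter Set Function
open scoped ENNReal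

variable {d : ℕ} {Ω : Type*} [mΩ : MeasurableSpace Ω] {T : ℝ} {M : MarketModel d Ω T}
  {Q : Fin d → Measure Ω}

/-- localized measurability of a stopped exchange rate. -/
lemma indicator_S_stopped_meas (a b : Fin d) {ρ : Ω → ℝ} (hρ : RST M.F ρ)
    {r' : ℝ} (hr' : r' ∈ Set.Icc (0:ℝ) T) (hρr : ∀ ω, ρ ω ∈ Set.Icc 0 r')
    {x : ℝ} (hx : x ∈ Set.Icc (0:ℝ) T) {P : Set Ω} (hP : MeasurableSet[M.F x] P)
    (hPx : ∀ ω ∈ P, ρ ω ≤ x) :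
    Measurable[M.F x] (P.indicator (fun ω => M.S (ρ ω) ω a b)) := by
  set v : ℕ → ℝ := fun k => min (x + r' / 2 ^ k) T with hv
  have hxv : ∀ k, x ≤ v k := fun k =>
    le_min (le_add_of_nonneg_right (div_nonneg hr'.1 (by positivity))) hx.2
  have hvIcc : ∀ k, v k ∈ Set.Icc (0:ℝ) T := fun k =>
    ⟨le_trans hx.1 (hxv k), min_le_right _ _⟩
  have hvanti : ∀ k K, K ≤ k → v k ≤ v K := by
    intro k K hKk
    refine min_le_min (add_le_add_right ?_ x) le_rfl
    gcongr
    all_goals first | exact hr'.1 | norm_num | exact hKk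
  set h : ℕ → Ω → ℝ≥0∞ := fun k => P.indicator (fun ω => M.S (disc r' k ρ ω) ω a b) with hh
  have step1 : ∀ k, Measurable[M.F (v k)] (h k) := by
    intro k
    have hsum : h k = fun ω => ∑ y ∈ dgrid r' k,
        ((P ∩ {ω' | disc r' k ρ ω' = y}).indicator (fun ω' => M.S y ω' a b)) ω := by
      funext ω
      by_cases hω : ω ∈ P
      · rw [hh]
        simp only
        rw [Set.indicator_of_mem hω]
        rw [Finset.sum_eq_single_of_mem (disc r' k ρ ω) (disc_mem_dgrid hr'.1 (hρr ω).2)]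
        · rw [Set.indicator_of_mem
            (show ω ∈ P ∩ {ω' | disc r' k ρ ω' = disc r' k ρ ω} from ⟨hω, rfl⟩)]
        · intro y _ hne
          apply Set.indicator_of_notMem
          rintro ⟨_, hd⟩
          exact hne (hd ▸ rfl)
      · rw [hh]
        simp only
        rw [Set.indicator_of_notMem hω]
        symm
        apply Finset.sum_eq_zero
        intro y _
        apply Set.indicator_of_notMem
        rintro ⟨hωP, _⟩
        exact hω hωP
    rw [hsum]
    refine Finset.measurable_sum (dgrid r' k) fun y hy => ?_
    by_cases hyv : y ≤ v k
    · refine Measurable.indicator ?_ ?_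
      · exact (meas_S (dgrid_mem_Icc hr'.1 hr'.2 hy) a b).mono (M.F.mono hyv) le_rfl
      · refine MeasurableSet.inter ?_ ?_
        · exact (M.F.mono (hxv k)) _ hP
        · exact (M.F.mono hyv) _ (stopping_disc_eq hρ hr'.1 hy)
    · have hemp : P ∩ {ω' | disc r' k ρ ω' = y} = ∅ := by
        ext ω
        simp only [Set.mem_inter_iff, Set.mem_setOf_eq, Set.mem_empty_iff_false, iff_false]
        rintro ⟨hωP, hd⟩
        apply hyv
        rw [← hd]
        refine le_min ?_ ?_
        · exact le_trans (disc_le_add hr'.1 (hρr ω).1 (hρr ω).2)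
            (add_le_add_left (hPx ω hωP) _)
        · exact le_trans (disc_le_r hr'.1 (hρr ω).2) hr'.2
      rw [hemp]
      simp only [Set.indicator_empty]
      exact measurable_const
  have step2 : Tendsto h atTop (nhds (P.indicator (fun ω => M.S (ρ ω) ω a b))) := by
    rw [tendsto_pi_nhds]
    intro ω
    by_cases hω : ω ∈ P
    · have : ∀ k, h k ω = M.S (disc r' k ρ ω) ω a b := fun k => Set.indicator_of_mem hω _
      simp only [this, Set.indicator_of_mem hω]
      exact tendsto_S_disc hr' hρr ω a b
    · have : ∀ k, h k ω = 0 := fun k => Set.indicator_of_notMem hω _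
      simp only [this, Set.indicator_of_notMem hω]
      exact tendsto_const_nhds
  have step3 : ∀ K, Measurable[M.F (v K)] (P.indicator (fun ω => M.S (ρ ω) ω a b)) := by
    intro K
    refine ENNReal.measurable_of_tendsto (f := fun k => h (k + K)) ?_ ?_
    · intro k
      exact (step1 (k + K)).mono (M.F.mono (hvanti (k + K) K (Nat.le_add_left K k))) le_rfl
    · exact step2.comp (tendsto_add_atTop_nat K)
  rcases lt_or_eq_of_le hx.2 with hxT | hxT
  · intro E hE
    have hK : ∀ K, MeasurableSet[M.F (v K)] (P.indicator (fun ω => M.S (ρ ω) ω a b) ⁻¹' E) :=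
      fun K => step3 K hE
    refine M.rc_F x ⟨hx.1, hxT⟩ _ ?_
    rw [MeasurableSpace.measurableSet_iInf]
    intro u
    rw [MeasurableSpace.measurableSet_iInf]
    intro hu
    have hexists : ∃ K, v K ≤ u := by
      rcases eq_or_lt_of_le hr'.1 with h0 | h0
      · refine ⟨0, ?_⟩
        have : v 0 = min x T := by rw [hv]; norm_num [← h0]
        rw [this]
        exact le_trans (min_le_left _ _) (le_of_lt hu)
      · obtain ⟨K, hKlt⟩ := exists_pow_lt_of_lt_one
          (div_pos (sub_pos.2 hu) h0) (by norm_num : (1/2 : ℝ) < 1)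
        refine ⟨K, le_trans (min_le_left _ _) ?_⟩
        have : r' / 2 ^ K < u - x := by
          rw [div_lt_iff₀ (by positivity : (0:ℝ) < 2 ^ K)]
          rw [lt_div_iff₀ h0] at hKlt
          calc r' = ((1:ℝ)/2) ^ K * 2 ^ K * r' := by
                rw [div_pow, one_pow, div_mul_cancel₀]
                · ring
                · positivity
            _ < (u - x) * 2 ^ K := by
                have h2K : (0:ℝ) < 2 ^ K := by positivity
                nlinarith [hKlt, h2K]
        linarith
    obtain ⟨K, hKu⟩ := hexists
    exact (M.F.mono hKu) _ (hK K)
  · have hvx : ∀ K, v K = x := by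
      intro K
      rw [hv, hxT]
      simp only
      exact min_eq_right (le_add_of_nonneg_right (div_nonneg hr'.1 (by positivity)))
    have := step3 0
    rwa [hvx 0] at this

/-- global measurability of a stopped exchange rate at time `r'`. -/
lemma S_stopped_meas (a b : Fin d) {ρ : Ω → ℝ} (hρ : RST M.F ρ)
    {r' : ℝ} (hr' : r' ∈ Set.Icc (0:ℝ) T) (hρr : ∀ ω, ρ ω ∈ Set.Icc 0 r') :
    Measurable[M.F r'] (fun ω => M.S (ρ ω) ω a b) := by
  have := indicator_S_stopped_meas a b hρ hr' hρr hr' MeasurableSet.univ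
    (fun ω _ => (hρr ω).2)
  rwa [Set.indicator_univ] at this

lemma S_stopped_meas_ambient (a b : Fin d) {ρ : Ω → ℝ} (hρ : RST M.F ρ)
    {r' : ℝ} (hr' : r' ∈ Set.Icc (0:ℝ) T) (hρr : ∀ ω, ρ ω ∈ Set.Icc 0 r') :
    Measurable (fun ω => M.S (ρ ω) ω a b) :=
  (S_stopped_meas a b hρ hr' hρr).mono (M.F.le r') le_rfl

end ZZ

namespace ZZ
open MeasureTheory Filter Set Function
open scoped ENNReal

variable {d : ℕ} {Ω : Type*} [mΩ : MeasurableSpace Ω] {T : ℝ} {M : MarketModel d Ω T}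
  {Q : Fin d → Measure Ω}

/-- The raw measurability hypothesis at discretization level `m`. -/
def Raw (M : MarketModel d Ω T) (σ : Ω → ℝ) (r : ℝ) (m : ℕ) (A : Set Ω) : Prop :=
  ∀ x ∈ dgrid r m, MeasurableSet[M.F x] (A ∩ {ω | disc r m σ ω = x})

section Raw

variable {σ : Ω → ℝ} {r : ℝ} {m n : ℕ} {A : Set Ω}

lemma Raw.ambient (hσr : ∀ ω, σ ω ∈ Set.Icc 0 r) (hr : 0 ≤ r) (h : Raw M σ r m A) :
    MeasurableSet A := by
  have : A = ⋃ x ∈ dgrid r m, (A ∩ {ω | disc r m σ ω = x}) := by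
    ext ω
    simp only [Set.mem_iUnion, Set.mem_inter_iff, Set.mem_setOf_eq]
    exact ⟨fun hω => ⟨disc r m σ ω, disc_mem_dgrid hr (hσr ω).2, hω, rfl⟩,
      fun ⟨x, _, hω, _⟩ => hω⟩
  rw [this]
  exact MeasurableSet.biUnion (dgrid r m).countable_toSet
    (fun x hx => M.F.le x _ (h x hx))

lemma raw_of_stopping (hσ : RST M.F σ) (hr : 0 ≤ r)
    (hσr : ∀ ω, σ ω ∈ Set.Icc 0 r)
    (hA : MeasurableSet[hσ.measurableSpace] A) (m : ℕ) : Raw M σ r m A :=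
  fun _ hx => stopping_disc_inter hσ hr (fun ω => (hσr ω).1) (fun ω => (hσr ω).2) hA hx

lemma Raw.mono (hσ : RST M.F σ) (hr : 0 ≤ r) (hσr : ∀ ω, σ ω ∈ Set.Icc 0 r)
    (h : Raw M σ r n A) (hNn : m ≤ n) : Raw M σ r m A := by
  intro x hx
  have hsets : A ∩ {ω | disc r m σ ω = x}
      = ⋃ y ∈ dgrid r n, ((A ∩ {ω | disc r n σ ω = y}) ∩ {ω | disc r m σ ω = x}) := by
    ext ω
    simp only [Set.mem_iUnion, Set.mem_inter_iff, Set.mem_setOf_eq]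
    constructor
    · rintro ⟨hωA, hd⟩
      exact ⟨disc r n σ ω, disc_mem_dgrid hr (hσr ω).2, ⟨hωA, rfl⟩, hd⟩
    · rintro ⟨y, _, ⟨hωA, _⟩, hd⟩
      exact ⟨hωA, hd⟩
  rw [hsets]
  refine MeasurableSet.biUnion (dgrid r n).countable_toSet fun y hy => ?_
  by_cases hyx : y ≤ x
  · exact ((M.F.mono hyx) _ (h y hy)).inter (stopping_disc_eq hσ hr hx)
  · have hemp : (A ∩ {ω | disc r n σ ω = y}) ∩ {ω | disc r m σ ω = x} = ∅ := by
      ext ω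
      simp only [Set.mem_inter_iff, Set.mem_setOf_eq, Set.mem_empty_iff_false, iff_false]
      rintro ⟨⟨_, hdn⟩, hdm⟩
      exact hyx (hdn ▸ hdm ▸ disc_antitone hr hNn)
    rw [hemp]
    exact @MeasurableSet.empty Ω (M.F x)
end Raw

section Core

variable {a b : Fin d} {σ : Ω → ℝ} {r : ℝ}

/-- discrete-level NC identity. -/
lemma NCd (hQ : NumeraireConsistent M Q) (a b : Fin d)
    (hσ : RST M.F σ) (hr : r ∈ Set.Icc (0:ℝ) T)
    (hσr : ∀ ω, σ ω ∈ Set.Icc 0 r) {m : ℕ} {A : Set Ω} (hA : Raw M σ r m A) :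
    ∫⁻ ω in A, M.S (disc r m σ ω) ω a b ∂(Q a)
      = M.S0 a b * Q b (A ∩ {ω | 0 < M.S (disc r m σ ω) ω b a}) :=
  discrete_NC hQ a b (disc r m σ) (dgrid r m)
    (fun ω => disc_mem_dgrid hr.1 (hσr ω).2)
    (fun x hx => dgrid_mem_Icc hr.1 hr.2 hx) hA

lemma raw_univ (hσ : RST M.F σ) (hr : r ∈ Set.Icc (0:ℝ) T) (m : ℕ) :
    Raw M σ r m Set.univ := by
  intro x hx
  rw [Set.univ_inter]
  exact stopping_disc_eq hσ hr.1 hx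

lemma disc_isStoppingTime (hσ : RST M.F σ) (hr : r ∈ Set.Icc (0:ℝ) T)
    (hσr : ∀ ω, σ ω ∈ Set.Icc 0 r) (m : ℕ) : RST M.F (disc r m σ) := by
  intro t
  have hset : {ω | disc r m σ ω ≤ t}
      = ⋃ y ∈ {y : ℝ | y ∈ dgrid r m ∧ y ≤ t}, {ω | disc r m σ ω = y} := by
    ext ω
    simp only [Set.mem_iUnion, Set.mem_setOf_eq]
    constructor
    · intro h
      exact ⟨disc r m σ ω, ⟨disc_mem_dgrid hr.1 (hσr ω).2, h⟩, rfl⟩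
    · rintro ⟨y, ⟨_, hyt⟩, hd⟩
      exact hd ▸ hyt
  rw [hset]
  refine MeasurableSet.biUnion
    (((dgrid r m).countable_toSet).mono fun y hy => hy.1) fun y hy => ?_
  exact (M.F.mono hy.2) _ (stopping_disc_eq hσ hr.1 hy.1)

lemma disc_range (hr : r ∈ Set.Icc (0:ℝ) T) (hσr : ∀ ω, σ ω ∈ Set.Icc 0 r) (m : ℕ) :
    ∀ ω, disc r m σ ω ∈ Set.Icc 0 r :=
  fun ω => ⟨disc_nonneg hr.1, disc_le_r hr.1 (hσr ω).2⟩

lemma meas_f_disc (a b : Fin d) (hσ : RST M.F σ) (hr : r ∈ Set.Icc (0:ℝ) T)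
    (hσr : ∀ ω, σ ω ∈ Set.Icc 0 r) (m : ℕ) :
    Measurable (fun ω => M.S (disc r m σ ω) ω a b) :=
  S_stopped_meas_ambient a b (disc_isStoppingTime hσ hr hσr m) hr (disc_range hr hσr m)

lemma meas_f_sigma (a b : Fin d) (hσ : RST M.F σ) (hr : r ∈ Set.Icc (0:ℝ) T)
    (hσr : ∀ ω, σ ω ∈ Set.Icc 0 r) :
    Measurable (fun ω => M.S (σ ω) ω a b) :=
  S_stopped_meas_ambient a b hσ hr hσr

lemma lintegral_disc_univ (hQ : NumeraireConsistent M Q) (a b : Fin d)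
    (hσ : RST M.F σ) (hr : r ∈ Set.Icc (0:ℝ) T)
    (hσr : ∀ ω, σ ω ∈ Set.Icc 0 r) (m : ℕ) :
    ∫⁻ ω, M.S (disc r m σ ω) ω a b ∂(Q a)
      = M.S0 a b * Q b {ω | 0 < M.S (disc r m σ ω) ω b a} := by
  have := NCd hQ a b hσ hr hσr (raw_univ hσ hr m)
  rwa [Measure.restrict_univ, Set.univ_inter] at this

lemma lintegral_disc_le (hQ : NumeraireConsistent M Q) (a b : Fin d)
    (hσ : RST M.F σ) (hr : r ∈ Set.Icc (0:ℝ) T)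
    (hσr : ∀ ω, σ ω ∈ Set.Icc 0 r) (m : ℕ) :
    ∫⁻ ω, M.S (disc r m σ ω) ω a b ∂(Q a) ≤ M.S0 a b := by
  haveI := hQ.1 b
  rw [lintegral_disc_univ hQ a b hσ hr hσr m]
  calc M.S0 a b * Q b _ ≤ M.S0 a b * 1 := by
        gcongr
        exact prob_le_one
    _ = M.S0 a b := mul_one _

/-- the total-mass upper bound for the stopped process. -/
lemma lintegral_sigma_le (hQ : NumeraireConsistent M Q) (a b : Fin d)
    (hσ : RST M.F σ) (hr : r ∈ Set.Icc (0:ℝ) T)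
    (hσr : ∀ ω, σ ω ∈ Set.Icc 0 r) :
    ∫⁻ ω, M.S (σ ω) ω a b ∂(Q a) ≤ M.S0 a b := by
  have hpt : ∀ ω, Tendsto (fun m => M.S (disc r m σ ω) ω a b) atTop
      (nhds (M.S (σ ω) ω a b)) := fun ω => tendsto_S_disc hr hσr ω a b
  have heq : (fun ω => M.S (σ ω) ω a b)
      = fun ω => liminf (fun m => M.S (disc r m σ ω) ω a b) atTop :=
    funext fun ω => ((hpt ω).liminf_eq).symm
  rw [heq]
  refine le_trans (lintegral_liminf_le (fun m => meas_f_disc a b hσ hr hσr m)) ?_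
  calc liminf (fun m => ∫⁻ ω, M.S (disc r m σ ω) ω a b ∂(Q a)) atTop
      ≤ liminf (fun _ : ℕ => M.S0 a b) atTop := liminf_le_liminf
        (Filter.Eventually.of_forall (lintegral_disc_le hQ a b hσ hr hσr))
    _ = M.S0 a b := liminf_const _

lemma sigma_ae_lt_top (hQ : NumeraireConsistent M Q) (a b : Fin d)
    (hσ : RST M.F σ) (hr : r ∈ Set.Icc (0:ℝ) T)
    (hσr : ∀ ω, σ ω ∈ Set.Icc 0 r) :
    ∀ᵐ ω ∂(Q a), M.S (σ ω) ω a b < ∞ := by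
  refine ae_lt_top (meas_f_sigma a b hσ hr hσr) ?_
  exact ne_top_of_le_ne_top (S0_lt_top M a b).ne (lintegral_sigma_le hQ a b hσ hr hσr)

/-- `Q a`-null: the other rate vanishes at the stopping time. -/
lemma null_zero_set (hQ : NumeraireConsistent M Q) (a b : Fin d)
    (hσ : RST M.F σ) (hr : r ∈ Set.Icc (0:ℝ) T)
    (hσr : ∀ ω, σ ω ∈ Set.Icc 0 r) :
    Q a {ω | M.S (σ ω) ω b a = 0} = 0 := by
  have hsub : {ω | M.S (σ ω) ω b a = 0} ⊆ {ω | ¬ (M.S (σ ω) ω a b < ∞)} := by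
    intro ω hω
    rw [Set.mem_setOf_eq, not_lt, top_le_iff]
    exact (S_top_iff ⟨(hσr ω).1, le_trans (hσr ω).2 hr.2⟩ ω a b).2 hω
  refine measure_mono_null hsub ?_
  have := sigma_ae_lt_top hQ a b hσ hr hσr
  rwa [ae_iff] at this

/-- zero-transfer between ordered stopping times through discretizations. -/
lemma zero_transfer (hQ : NumeraireConsistent M Q) (a b : Fin d)
    (hσ : RST M.F σ) (hr : r ∈ Set.Icc (0:ℝ) T)
    (hσr : ∀ ω, σ ω ∈ Set.Icc 0 r) {σ' : Ω → ℝ}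
    (hσ' : RST M.F σ') {r' : ℝ} (hr' : r' ∈ Set.Icc (0:ℝ) T)
    (hσ'r : ∀ ω, σ' ω ∈ Set.Icc 0 r') (hle : ∀ ω, σ' ω ≤ σ ω) (m : ℕ) :
    Q b ({ω | M.S (σ' ω) ω b a = 0}
      ∩ {ω | 0 < M.S (disc r m σ ω) ω b a}) = 0 := by
  set A := {ω | M.S (σ' ω) ω b a = 0} with hA
  have hraw : Raw M σ r m A := by
    intro x hx
    have hP : MeasurableSet[M.F x] {ω | disc r m σ ω = x} := stopping_disc_eq hσ hr.1 hx
    have hPx : ∀ ω ∈ {ω | disc r m σ ω = x}, σ' ω ≤ x := by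
      intro ω hω
      rw [Set.mem_setOf_eq] at hω
      exact le_trans (hle ω) (hω ▸ le_disc hr.1 (hσr ω).1 (hσr ω).2)
    have hind := indicator_S_stopped_meas b a hσ' hr' hσ'r
      (dgrid_mem_Icc hr.1 hr.2 hx) hP hPx
    have hsets : A ∩ {ω | disc r m σ ω = x}
        = {ω | disc r m σ ω = x}
          ∩ (({ω | disc r m σ ω = x}).indicator (fun ω => M.S (σ' ω) ω b a) ⁻¹' {0}) := by
      ext ω
      simp only [Set.mem_inter_iff, Set.mem_setOf_eq, Set.mem_preimage,
        Set.mem_singleton_iff, hA]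
      constructor
      · rintro ⟨h0, hd⟩
        refine ⟨hd, ?_⟩
        rw [Set.indicator_of_mem (show ω ∈ {ω | disc r m σ ω = x} from hd)]
        exact h0
      · rintro ⟨hd, h0⟩
        rw [Set.indicator_of_mem (show ω ∈ {ω | disc r m σ ω = x} from hd)] at h0
        exact ⟨h0, hd⟩
    rw [hsets]
    exact hP.inter (hind (measurableSet_singleton 0))
  have hNCd := NCd hQ a b hσ hr hσr hraw
  rw [setLIntegral_measure_zero _ _ (null_zero_set hQ a b hσ' hr' hσ'r)] at hNCd
  rcases mul_eq_zero.1 hNCd.symm with h | h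
  · exact absurd h (S0_ne_zero (nonempty_of_NC hQ a) M a b)
  · exact h

/-- absorption between discretization levels. -/
lemma B_mono_null (hQ : NumeraireConsistent M Q) (a b : Fin d)
    (hσ : RST M.F σ) (hr : r ∈ Set.Icc (0:ℝ) T)
    (hσr : ∀ ω, σ ω ∈ Set.Icc 0 r) {N n : ℕ} (hNn : N ≤ n) :
    Q b ({ω | 0 < M.S (disc r N σ ω) ω b a}
      \ {ω | 0 < M.S (disc r n σ ω) ω b a}) = 0 := by
  refine measure_mono_null ?_
    (absorb_pair hQ a b (ρ₁ := disc r n σ) (ρ₂ := disc r N σ)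
      (fun ω => disc_mem_dgrid hr.1 (hσr ω).2) (fun ω => disc_mem_dgrid hr.1 (hσr ω).2)
      (fun x hx => dgrid_mem_Icc hr.1 hr.2 hx) (fun x hx => dgrid_mem_Icc hr.1 hr.2 hx)
      (fun ω => disc_antitone hr.1 hNn))
  rintro ω ⟨h1, h2⟩
  rw [Set.mem_setOf_eq] at h1
  refine ⟨?_, h1⟩
  rw [Set.mem_setOf_eq]
  rw [Set.mem_setOf_eq] at h2
  push_neg at h2
  exact le_antisymm h2 zero_le

end Core

end ZZ

namespace ZZ
open MeasureTheory Filter Set Function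
open scoped ENNReal

variable {d : ℕ} {Ω : Type*} [mΩ : MeasurableSpace Ω] {T : ℝ} {M : MarketModel d Ω T}
  {Q : Fin d → Measure Ω} {σ : Ω → ℝ} {r : ℝ}

/-- convergence of the positivity sets. -/
lemma tendsto_Q_B (hQ : NumeraireConsistent M Q) (a b : Fin d)
    (hσ : RST M.F σ) (hr : r ∈ Set.Icc (0:ℝ) T)
    (hσr : ∀ ω, σ ω ∈ Set.Icc 0 r) {A : Set Ω} (hA : MeasurableSet A) :
    Tendsto (fun m => Q b (A ∩ {ω | 0 < M.S (disc r m σ ω) ω b a})) atTop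
      (nhds (Q b (A ∩ {ω | 0 < M.S (σ ω) ω b a}))) := by
  set B : ℕ → Set Ω := fun m => {ω | 0 < M.S (disc r m σ ω) ω b a} with hB
  set Bs : Set Ω := {ω | 0 < M.S (σ ω) ω b a} with hBs
  have hchain : ∀ N n : ℕ, N ≤ n → Q b (B N \ B n) = 0 :=
    fun N n hNn => B_mono_null hQ a b hσ hr hσr hNn
  have hBmnull : ∀ m, Q b (B m \ Bs) = 0 := by
    intro m
    refine measure_mono_null ?_ (zero_transfer hQ a b hσ hr hσr hσ hr hσr (fun ω => le_rfl) m)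
    rintro ω ⟨h1, h2⟩
    rw [hBs, Set.mem_setOf_eq] at h2
    push_neg at h2
    exact ⟨le_antisymm h2 zero_le, h1⟩
  have hBsub : Bs ⊆ ⋃ m, B m := by
    intro ω hω
    by_contra hcon
    rw [Set.mem_iUnion] at hcon
    push_neg at hcon
    have hzero : ∀ m, M.S (disc r m σ ω) ω b a = 0 := by
      intro m
      have := hcon m
      rw [hB, Set.mem_setOf_eq, not_lt] at this
      exact le_antisymm this zero_le
    have ht := tendsto_S_disc (M := M) hr hσr ω b a
    have ht0 : Tendsto (fun _ : ℕ => (0 : ℝ≥0∞)) atTop (nhds (M.S (σ ω) ω b a)) := by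
      refine ht.congr fun m => (hzero m)
    have := tendsto_nhds_unique ht0 tendsto_const_nhds
    rw [hBs, Set.mem_setOf_eq] at hω
    rw [this] at hω
    exact lt_irrefl 0 hω
  set B' : ℕ → Set Ω := fun m => ⋃ k ∈ Finset.range (m + 1), B k with hB'
  have hBsubB' : ∀ m, B m ⊆ B' m := fun m =>
    Set.subset_biUnion_of_mem (Finset.self_mem_range_succ m)
  have hB'eq : ∀ m, Q b (A ∩ B' m) = Q b (A ∩ B m) := by
    intro m
    refine le_antisymm ?_ (measure_mono (Set.inter_subset_inter_right A (hBsubB' m)))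
    have hsplit : A ∩ B' m ⊆ (A ∩ B m) ∪ (⋃ k ∈ Finset.range (m + 1), (B k \ B m)) := by
      rintro ω ⟨hωA, hωB'⟩
      by_cases hωB : ω ∈ B m
      · exact Or.inl ⟨hωA, hωB⟩
      · obtain ⟨k, hk, hωk⟩ := Set.mem_iUnion₂.1 hωB'
        exact Or.inr (Set.mem_biUnion hk ⟨hωk, hωB⟩)
    refine le_trans (measure_mono hsplit) ?_
    refine le_trans (measure_union_le _ _) ?_
    have hnull : Q b (⋃ k ∈ Finset.range (m + 1), (B k \ B m)) = 0 := by
      refine (measure_biUnion_null_iff (Finset.range (m + 1)).countable_toSet).2 ?_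
      intro k hk
      rw [Finset.mem_coe, Finset.mem_range, Nat.lt_succ_iff] at hk
      exact hchain k m hk
    rw [hnull, add_zero]
  have hmono : Monotone (fun m => A ∩ B' m) := by
    intro m n hmn
    refine Set.inter_subset_inter_right A ?_
    refine Set.iUnion₂_subset fun k hk => ?_
    exact Set.subset_biUnion_of_mem (Finset.mem_range.2
      (lt_of_lt_of_le (Finset.mem_range.1 hk) (Nat.succ_le_succ hmn)))
  have htend : Tendsto (fun m => Q b (A ∩ B' m)) atTop (nhds (Q b (⋃ m, A ∩ B' m))) :=
    tendsto_measure_iUnion_atTop hmono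
  have hU : (⋃ m, A ∩ B' m) = A ∩ ⋃ m, B m := by
    ext ω
    simp only [Set.mem_iUnion, Set.mem_inter_iff, hB']
    constructor
    · rintro ⟨m, hωA, k, _, hωk⟩
      exact ⟨hωA, k, hωk⟩
    · rintro ⟨hωA, m, hωm⟩
      exact ⟨m, hωA, m, Finset.self_mem_range_succ m, hωm⟩
  have hfinal : Q b (A ∩ ⋃ m, B m) = Q b (A ∩ Bs) := by
    refine le_antisymm ?_ (measure_mono (Set.inter_subset_inter_right A hBsub))
    have hsplit : A ∩ ⋃ m, B m ⊆ (A ∩ Bs) ∪ ⋃ m, (B m \ Bs) := by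
      rintro ω ⟨hωA, hωB⟩
      by_cases hωBs : ω ∈ Bs
      · exact Or.inl ⟨hωA, hωBs⟩
      · obtain ⟨m, hωm⟩ := Set.mem_iUnion.1 hωB
        exact Or.inr (Set.mem_iUnion.2 ⟨m, hωm, hωBs⟩)
    refine le_trans (measure_mono hsplit) ?_
    refine le_trans (measure_union_le _ _) ?_
    rw [measure_iUnion_null hBmnull, add_zero]
  have := htend.congr hB'eq
  rwa [hU, hfinal] at this

/-- Fatou upper bound on sets. -/
lemma fatou_raw (hQ : NumeraireConsistent M Q) (a b : Fin d)
    (hσ : RST M.F σ) (hr : r ∈ Set.Icc (0:ℝ) T)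
    (hσr : ∀ ω, σ ω ∈ Set.Icc 0 r) {A : Set Ω} (hraw : ∀ m, Raw M σ r m A)
    (hA : MeasurableSet A) :
    ∫⁻ ω in A, M.S (σ ω) ω a b ∂(Q a)
      ≤ M.S0 a b * Q b (A ∩ {ω | 0 < M.S (σ ω) ω b a}) := by
  have hpt : ∀ ω, Tendsto (fun m => M.S (disc r m σ ω) ω a b) atTop
      (nhds (M.S (σ ω) ω a b)) := fun ω => tendsto_S_disc hr hσr ω a b
  have heq : (fun ω => M.S (σ ω) ω a b)
      = fun ω => liminf (fun m => M.S (disc r m σ ω) ω a b) atTop :=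
    funext fun ω => ((hpt ω).liminf_eq).symm
  calc ∫⁻ ω in A, M.S (σ ω) ω a b ∂(Q a)
      = ∫⁻ ω in A, liminf (fun m => M.S (disc r m σ ω) ω a b) atTop ∂(Q a) := by rw [heq]
    _ ≤ liminf (fun m => ∫⁻ ω in A, M.S (disc r m σ ω) ω a b ∂(Q a)) atTop :=
        lintegral_liminf_le (fun m => meas_f_disc a b hσ hr hσr m)
    _ = M.S0 a b * Q b (A ∩ {ω | 0 < M.S (σ ω) ω b a}) := by
        have hrw : (fun m => ∫⁻ ω in A, M.S (disc r m σ ω) ω a b ∂(Q a))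
            = fun m => M.S0 a b * Q b (A ∩ {ω | 0 < M.S (disc r m σ ω) ω b a}) :=
          funext fun m => NCd hQ a b hσ hr hσr (hraw m)
        rw [hrw]
        refine Tendsto.liminf_eq ?_
        exact ENNReal.Tendsto.const_mul (tendsto_Q_B hQ a b hσ hr hσr hA)
          (Or.inr (S0_lt_top M a b).ne)

end ZZ

namespace ZZ
open MeasureTheory Filter Set Function
open scoped ENNReal

variable {d : ℕ} {Ω : Type*} [mΩ : MeasurableSpace Ω] {T : ℝ} {M : MarketModel d Ω T}
  {Q : Fin d → Measure Ω} {σ : Ω → ℝ} {r : ℝ}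

/-- the total-mass lower bound (uniform integrability of the discretized family). -/
lemma lower_bound (hQ : NumeraireConsistent M Q) (a b : Fin d)
    (hσ : RST M.F σ) (hr : r ∈ Set.Icc (0:ℝ) T)
    (hσr : ∀ ω, σ ω ∈ Set.Icc 0 r)
    (hpos : Q b {ω | 0 < M.S (σ ω) ω b a} = 1) :
    M.S0 a b ≤ ∫⁻ ω, M.S (σ ω) ω a b ∂(Q a) := by
  haveI := hQ.1 a
  haveI := hQ.1 b
  set c := M.S0 a b with hc
  have hcT : c ≠ ∞ := (S0_lt_top M a b).ne
  set f : ℕ → Ω → ℝ≥0∞ := fun m ω => M.S (disc r m σ ω) ω a b with hf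
  have hfm : ∀ m, Measurable (f m) := fun m => meas_f_disc a b hσ hr hσr m
  have hEm : ∀ m, ∫⁻ ω, f m ω ∂(Q a) ≤ c := fun m => lintegral_disc_le hQ a b hσ hr hσr m
  -- expectations tend to c
  have htendE : Tendsto (fun m => ∫⁻ ω, f m ω ∂(Q a)) atTop (nhds c) := by
    have h1 : Tendsto (fun m => Q b (Set.univ ∩ {ω | 0 < M.S (disc r m σ ω) ω b a})) atTop
        (nhds (Q b (Set.univ ∩ {ω | 0 < M.S (σ ω) ω b a}))) :=
      tendsto_Q_B hQ a b hσ hr hσr MeasurableSet.univ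
    simp only [Set.univ_inter] at h1
    rw [hpos] at h1
    have h2 := ENNReal.Tendsto.const_mul h1 (Or.inr hcT)
    rw [mul_one] at h2
    refine h2.congr fun m => ?_
    exact (lintegral_disc_univ hQ a b hσ hr hσr m).symm
  refine ENNReal.le_of_forall_pos_le_add fun ε hε hfin => ?_
  set ε3 : ℝ≥0∞ := (ε : ℝ≥0∞) / 3 with hε3def
  have hε3 : ε3 ≠ 0 := by
    simp only [hε3def, ne_eq, ENNReal.div_eq_zero_iff]
    push_neg
    exact ⟨by exact_mod_cast hε.ne', by norm_num⟩
  have hε3T : ε3 ≠ ∞ := by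
    simp only [hε3def]
    exact (ENNReal.div_lt_top ENNReal.coe_ne_top (by norm_num)).ne
  have hε3sum : ε3 + ε3 + ε3 = (ε : ℝ≥0∞) := ENNReal.add_thirds _
  -- choose N
  have hNex : ∃ N, c ≤ (∫⁻ ω, f N ω ∂(Q a)) + ε3 := by
    have hlt : c < c + ε3 := ENNReal.lt_add_right hcT hε3
    have h1 : Tendsto (fun m => (∫⁻ ω, f m ω ∂(Q a)) + ε3) atTop (nhds (c + ε3)) :=
      htendE.add tendsto_const_nhds
    have := (h1.eventually (eventually_gt_nhds hlt)).exists
    obtain ⟨N, hN⟩ := this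
    exact ⟨N, hN.le⟩
  obtain ⟨N, hN⟩ := hNex
  -- choose K' with small tail for f N
  have hfNfin : ∀ᵐ ω ∂(Q a), f N ω < ∞ :=
    ae_lt_top (hfm N) (ne_top_of_le_ne_top hcT (hEm N))
  have htail : Tendsto (fun K' : ℕ => ∫⁻ ω in {ω | (K' : ℝ≥0∞) < f N ω}, f N ω ∂(Q a))
      atTop (nhds 0) := by
    have hind : ∀ K' : ℕ, ∫⁻ ω in {ω | (K' : ℝ≥0∞) < f N ω}, f N ω ∂(Q a)
        = ∫⁻ ω, ({ω | (K' : ℝ≥0∞) < f N ω}).indicator (f N) ω ∂(Q a) := by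
      intro K'
      rw [lintegral_indicator (measurableSet_lt measurable_const (hfm N))]
    have h0 : (0 : ℝ≥0∞) = ∫⁻ ω, (fun _ => (0:ℝ≥0∞)) ω ∂(Q a) := by
      simp
    rw [h0]
    refine Tendsto.congr (fun K' => (hind K').symm) ?_
    refine tendsto_lintegral_of_dominated_convergence (f N) ?_ ?_
      (ne_top_of_le_ne_top hcT (hEm N)) ?_
    · intro K'
      exact (hfm N).indicator (measurableSet_lt measurable_const (hfm N))
    · intro K'
      refine Filter.Eventually.of_forall fun ω => ?_
      exact Set.indicator_le_self _ _ ω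
    · refine hfNfin.mono fun ω hω => ?_
      obtain ⟨n0, hn0⟩ := ENNReal.exists_nat_gt hω.ne
      have hev : ∀ᶠ K' : ℕ in atTop,
          ({ω | (K' : ℝ≥0∞) < f N ω}).indicator (f N) ω = 0 := by
        refine Filter.eventually_atTop.2 ⟨n0, fun K' hK' => ?_⟩
        refine Set.indicator_of_notMem ?_ _
        rw [Set.mem_setOf_eq, not_lt]
        refine le_trans hn0.le ?_
        exact_mod_cast hK'
      exact Tendsto.congr' (hev.mono fun K'' h => h.symm) tendsto_const_nhds
  have hK'ex : ∃ K' : ℕ, ∫⁻ ω in {ω | (K' : ℝ≥0∞) < f N ω}, f N ω ∂(Q a) ≤ ε3 := by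
    have := (htail.eventually (eventually_lt_nhds (pos_iff_ne_zero.2 hε3))).exists
    obtain ⟨K', hK'⟩ := this
    exact ⟨K', hK'.le⟩
  obtain ⟨K', hK'⟩ := hK'ex
  -- choose K
  set K : ℝ≥0∞ := (K' : ℝ≥0∞) * c / ε3 + 1 with hKdef
  have hK0 : K ≠ 0 := by
    simp only [hKdef]
    intro h
    rw [add_eq_zero] at h
    exact one_ne_zero h.2
  have hKT : K ≠ ∞ := by
    simp only [hKdef]
    refine ENNReal.add_ne_top.2 ⟨?_, ENNReal.one_ne_top⟩
    exact (ENNReal.div_lt_top (ENNReal.mul_ne_top ENNReal.coe_ne_top hcT) hε3).ne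
  have hmarkov : ∀ n, Q a {ω | K < f n ω} ≤ c / K := by
    intro n
    have h1 : Q a {ω | K < f n ω} ≤ Q a {ω | K ≤ f n ω} := by
      refine measure_mono ?_
      intro ω hω
      rw [Set.mem_setOf_eq] at hω ⊢
      exact hω.le
    refine le_trans h1 ?_
    refine le_trans (meas_ge_le_lintegral_div (hfm n).aemeasurable hK0 hKT) ?_
    exact ENNReal.div_le_div_right (hEm n) K
  have hKbound : (K' : ℝ≥0∞) * (c / K) ≤ ε3 := by
    have hKC : (K' : ℝ≥0∞) * c ≤ ε3 * K := by
      rw [hKdef, mul_add, mul_one]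
      have : ε3 * ((K' : ℝ≥0∞) * c / ε3) = (K' : ℝ≥0∞) * c := by
        rw [ENNReal.mul_div_cancel' (fun h => absurd h hε3) (fun h => absurd h hε3T)]
      rw [this]
      exact le_add_right le_rfl
    calc (K' : ℝ≥0∞) * (c / K) = (K' : ℝ≥0∞) * c / K := by
          rw [mul_div_assoc]
      _ ≤ ε3 * K / K := ENNReal.div_le_div_right hKC K
      _ = ε3 := by rw [mul_div_assoc, ENNReal.div_self hK0 hKT, mul_one]
  -- main chain for n ≥ N
  have hchain : ∀ n, N ≤ n → c ≤ (∫⁻ ω, (f n ω ⊓ K) ∂(Q a)) + (ε : ℝ≥0∞) := by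
    intro n hNn
    set s : Set Ω := {ω | f n ω ≤ K} with hs
    have hsm : MeasurableSet s := measurableSet_le (hfm n) measurable_const
    have hsc : sᶜ = {ω | K < f n ω} := by
      ext ω; simp [hs, not_le]
    -- raw measurability of s
    have hraws : ∀ m, m ≤ n → Raw M σ r m s := by
      intro m hmn
      refine Raw.mono hσ hr.1 hσr ?_ hmn
      intro y hy
      have hsets : s ∩ {ω | disc r n σ ω = y}
          = {ω | M.S y ω a b ≤ K} ∩ {ω | disc r n σ ω = y} := by
        ext ω
        simp only [Set.mem_inter_iff, Set.mem_setOf_eq, hs, hf]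
        constructor
        · rintro ⟨h1, h2⟩; exact ⟨h2 ▸ h1, h2⟩
        · rintro ⟨h1, h2⟩; exact ⟨h2 ▸ h1, h2⟩
      rw [hsets]
      exact ((meas_S (dgrid_mem_Icc hr.1 hr.2 hy) a b) measurableSet_Iic).inter
        (stopping_disc_eq hσ hr.1 hy)
    -- comparison on s between levels N and n
    have hkey1 : ∫⁻ ω in s, f N ω ∂(Q a) ≤ ∫⁻ ω in s, f n ω ∂(Q a) := by
      rw [NCd hQ a b hσ hr hσr (hraws N hNn), NCd hQ a b hσ hr hσr (hraws n le_rfl)]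
      refine mul_le_mul_right ?_ c
      have hsplit : s ∩ {ω | 0 < M.S (disc r N σ ω) ω b a}
          ⊆ (s ∩ {ω | 0 < M.S (disc r n σ ω) ω b a})
            ∪ ({ω | 0 < M.S (disc r N σ ω) ω b a}
                \ {ω | 0 < M.S (disc r n σ ω) ω b a}) := by
        rintro ω ⟨hω1, hω2⟩
        by_cases hω3 : ω ∈ {ω | 0 < M.S (disc r n σ ω) ω b a}
        · exact Or.inl ⟨hω1, hω3⟩
        · exact Or.inr ⟨hω2, hω3⟩
      refine le_trans (measure_mono hsplit) ?_
      refine le_trans (measure_union_le _ _) ?_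
      rw [B_mono_null hQ a b hσ hr hσr hNn, add_zero]
    have hkey2 : ∫⁻ ω in s, f n ω ∂(Q a) ≤ ∫⁻ ω, (f n ω ⊓ K) ∂(Q a) := by
      have hcongr : ∫⁻ ω in s, f n ω ∂(Q a) = ∫⁻ ω in s, (f n ω ⊓ K) ∂(Q a) := by
        refine setLIntegral_congr_fun hsm ?_
        refine fun ω hω => ?_
        exact (inf_eq_left.2 hω).symm
      rw [hcongr]
      exact setLIntegral_le_lintegral s _
    have hkey3 : ∫⁻ ω in sᶜ, f N ω ∂(Q a) ≤ ε3 + ε3 := by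
      have hsplit2 : sᶜ ⊆ ({ω | (K' : ℝ≥0∞) < f N ω}) ∪ (sᶜ ∩ {ω | f N ω ≤ K'}) := by
        intro ω hω
        by_cases h : (K' : ℝ≥0∞) < f N ω
        · exact Or.inl h
        · exact Or.inr ⟨hω, not_lt.1 h⟩
      refine le_trans (lintegral_mono_set hsplit2) ?_
      refine le_trans (lintegral_union_le _ _ _) ?_
      refine add_le_add hK' ?_
      calc ∫⁻ ω in sᶜ ∩ {ω | f N ω ≤ K'}, f N ω ∂(Q a)
          ≤ ∫⁻ _ in sᶜ ∩ {ω | f N ω ≤ K'}, (K' : ℝ≥0∞) ∂(Q a) := by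
            refine setLIntegral_mono measurable_const fun ω hω => hω.2
        _ = (K' : ℝ≥0∞) * Q a (sᶜ ∩ {ω | f N ω ≤ K'}) := by
            rw [setLIntegral_const]
        _ ≤ (K' : ℝ≥0∞) * Q a {ω | K < f n ω} := by
            refine mul_le_mul_right (measure_mono ?_) _
            rintro ω ⟨hω1, _⟩
            rw [← hsc]; exact hω1
        _ ≤ (K' : ℝ≥0∞) * (c / K) := mul_le_mul_right (hmarkov n) _
        _ ≤ ε3 := hKbound
    have htotN : ∫⁻ ω, f N ω ∂(Q a)
        = ∫⁻ ω in s, f N ω ∂(Q a) + ∫⁻ ω in sᶜ, f N ω ∂(Q a) :=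
      (lintegral_add_compl (f N) hsm).symm
    calc c ≤ (∫⁻ ω, f N ω ∂(Q a)) + ε3 := hN
      _ = (∫⁻ ω in s, f N ω ∂(Q a) + ∫⁻ ω in sᶜ, f N ω ∂(Q a)) + ε3 := by rw [htotN]
      _ ≤ (∫⁻ ω in s, f n ω ∂(Q a) + (ε3 + ε3)) + ε3 := by
          exact add_le_add (add_le_add hkey1 hkey3) le_rfl
      _ ≤ ((∫⁻ ω, (f n ω ⊓ K) ∂(Q a)) + (ε3 + ε3)) + ε3 := by
          exact add_le_add (add_le_add hkey2 le_rfl) le_rfl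
      _ = (∫⁻ ω, (f n ω ⊓ K) ∂(Q a)) + (ε3 + ε3 + ε3) := by ring
      _ = (∫⁻ ω, (f n ω ⊓ K) ∂(Q a)) + (ε : ℝ≥0∞) := by rw [hε3sum]
  -- pass to the limit in n
  have htendmin : Tendsto (fun n => ∫⁻ ω, (f n ω ⊓ K) ∂(Q a)) atTop
      (nhds (∫⁻ ω, (M.S (σ ω) ω a b ⊓ K) ∂(Q a))) := by
    refine tendsto_lintegral_of_dominated_convergence (fun _ => K) ?_ ?_ ?_ ?_
    · intro n
      exact (hfm n).min measurable_const
    · intro n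
      exact Filter.Eventually.of_forall fun ω => inf_le_right
    · rw [lintegral_const, measure_univ, mul_one]
      exact hKT
    · refine Filter.Eventually.of_forall fun ω => ?_
      exact (tendsto_S_disc hr hσr ω a b).min tendsto_const_nhds
  have hlim : c ≤ (∫⁻ ω, (M.S (σ ω) ω a b ⊓ K) ∂(Q a)) + (ε : ℝ≥0∞) := by
    refine ge_of_tendsto (htendmin.add tendsto_const_nhds) ?_
    exact Filter.eventually_atTop.2 ⟨N, hchain⟩
  refine le_trans hlim ?_
  exact add_le_add (lintegral_mono fun ω => inf_le_left) le_rfl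

end ZZ

namespace ZZ
open MeasureTheory Filter Set Function
open scoped ENNReal

variable {d : ℕ} {Ω : Type*} [mΩ : MeasurableSpace Ω] {T : ℝ} {M : MarketModel d Ω T}
  {Q : Fin d → Measure Ω} {σ : Ω → ℝ} {r : ℝ}

lemma stopping_ambient (hσ : RST M.F σ) (hr : r ∈ Set.Icc (0:ℝ) T)
    (hσr : ∀ ω, σ ω ∈ Set.Icc 0 r) {A : Set Ω}
    (hA : MeasurableSet[hσ.measurableSpace] A) : MeasurableSet A := by
  have h1 := (hσ.measurableSet A).1 hA r
  have h2 : A ∩ {ω | σ ω ≤ r} = A := by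
    refine Set.inter_eq_left.2 fun ω _ => (hσr ω).2
  rw [h2] at h1
  exact M.F.le r _ h1

/-- the key change-of-measure identity on the stopping σ-algebra. -/
lemma key_equality (hQ : NumeraireConsistent M Q) (a b : Fin d)
    (hσ : RST M.F σ) (hr : r ∈ Set.Icc (0:ℝ) T)
    (hσr : ∀ ω, σ ω ∈ Set.Icc 0 r)
    (hpos : Q b {ω | 0 < M.S (σ ω) ω b a} = 1) {A : Set Ω}
    (hA : MeasurableSet[hσ.measurableSpace] A) :
    ∫⁻ ω in A, M.S (σ ω) ω a b ∂(Q a) = M.S0 a b * Q b A := by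
  haveI := hQ.1 b
  set c := M.S0 a b with hc
  have hcT : c ≠ ∞ := (S0_lt_top M a b).ne
  have hAmb : MeasurableSet A := stopping_ambient hσ hr hσr hA
  have hupper : ∀ {A' : Set Ω}, MeasurableSet[hσ.measurableSpace] A' →
      ∫⁻ ω in A', M.S (σ ω) ω a b ∂(Q a) ≤ c * Q b A' := by
    intro A' hA'
    refine le_trans (fatou_raw hQ a b hσ hr hσr
      (fun m => raw_of_stopping hσ hr.1 hσr hA' m) (stopping_ambient hσ hr hσr hA')) ?_
    exact mul_le_mul_right (measure_mono Set.inter_subset_left) c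
  have htot : ∫⁻ ω in A, M.S (σ ω) ω a b ∂(Q a)
      + ∫⁻ ω in Aᶜ, M.S (σ ω) ω a b ∂(Q a) = ∫⁻ ω, M.S (σ ω) ω a b ∂(Q a) :=
    lintegral_add_compl _ hAmb
  have hfstot : ∫⁻ ω, M.S (σ ω) ω a b ∂(Q a) = c :=
    le_antisymm (lintegral_sigma_le hQ a b hσ hr hσr) (lower_bound hQ a b hσ hr hσr hpos)
  have hβtot : c * Q b A + c * Q b Aᶜ = c := by
    rw [← mul_add, measure_add_measure_compl hAmb, measure_univ, mul_one]
  have hα : ∫⁻ ω in A, M.S (σ ω) ω a b ∂(Q a) ≤ c * Q b A := hupper hA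
  have hα' : ∫⁻ ω in Aᶜ, M.S (σ ω) ω a b ∂(Q a) ≤ c * Q b Aᶜ := hupper hA.compl
  have hβ'T : c * Q b Aᶜ ≠ ∞ := ENNReal.mul_ne_top hcT (measure_ne_top _ _)
  refine le_antisymm hα ?_
  have hchain : c * Q b A + c * Q b Aᶜ ≤ ∫⁻ ω in A, M.S (σ ω) ω a b ∂(Q a) + c * Q b Aᶜ := by
    calc c * Q b A + c * Q b Aᶜ = c := hβtot
      _ = ∫⁻ ω, M.S (σ ω) ω a b ∂(Q a) := hfstot.symm
      _ = ∫⁻ ω in A, M.S (σ ω) ω a b ∂(Q a) + ∫⁻ ω in Aᶜ, M.S (σ ω) ω a b ∂(Q a) :=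
        htot.symm
      _ ≤ ∫⁻ ω in A, M.S (σ ω) ω a b ∂(Q a) + c * Q b Aᶜ := add_le_add le_rfl hα'
  exact (ENNReal.add_le_add_iff_right hβ'T).1 hchain

lemma Bsigma_subset (hr : r ∈ Set.Icc (0:ℝ) T) (hσr : ∀ ω, σ ω ∈ Set.Icc 0 r) (a b : Fin d) :
    {ω | 0 < M.S (σ ω) ω b a} ⊆ ⋃ m, {ω | 0 < M.S (disc r m σ ω) ω b a} := by
  intro ω hω
  by_contra hcon
  rw [Set.mem_iUnion] at hcon
  push_neg at hcon
  have hzero : ∀ m, M.S (disc r m σ ω) ω b a = 0 := by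
    intro m
    have := hcon m
    rw [Set.mem_setOf_eq, not_lt] at this
    exact le_antisymm this zero_le
  have ht := tendsto_S_disc (M := M) hr hσr ω b a
  have ht0 : Tendsto (fun _ : ℕ => (0 : ℝ≥0∞)) atTop (nhds (M.S (σ ω) ω b a)) :=
    ht.congr fun m => hzero m
  have := tendsto_nhds_unique ht0 tendsto_const_nhds
  rw [Set.mem_setOf_eq] at hω
  rw [this] at hω
  exact lt_irrefl 0 hω

/-- positivity transfers to earlier stopping times. -/
lemma pos_transfer (hQ : NumeraireConsistent M Q) (a b : Fin d)
    (hσ : RST M.F σ) (hr : r ∈ Set.Icc (0:ℝ) T)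
    (hσr : ∀ ω, σ ω ∈ Set.Icc 0 r)
    {σ' : Ω → ℝ} (hσ' : RST M.F σ') {r' : ℝ} (hr' : r' ∈ Set.Icc (0:ℝ) T)
    (hσ'r : ∀ ω, σ' ω ∈ Set.Icc 0 r') (hle : ∀ ω, σ' ω ≤ σ ω)
    (hpos : Q b {ω | 0 < M.S (σ ω) ω b a} = 1) :
    Q b {ω | 0 < M.S (σ' ω) ω b a} = 1 := by
  haveI := hQ.1 b
  have hnull : Q b ({ω | M.S (σ' ω) ω b a = 0} ∩ {ω | 0 < M.S (σ ω) ω b a}) = 0 := by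
    refine measure_mono_null ?_ (measure_iUnion_null fun m =>
      zero_transfer hQ a b hσ hr hσr hσ' hr' hσ'r hle m)
    rintro ω ⟨h1, h2⟩
    obtain ⟨m, hm⟩ := Set.mem_iUnion.1 (Bsigma_subset hr hσr a b h2)
    exact Set.mem_iUnion.2 ⟨m, h1, hm⟩
  have hsub : {ω | 0 < M.S (σ ω) ω b a}
      ⊆ {ω | 0 < M.S (σ' ω) ω b a}
        ∪ ({ω | M.S (σ' ω) ω b a = 0} ∩ {ω | 0 < M.S (σ ω) ω b a}) := by
    intro ω hω
    by_cases h : 0 < M.S (σ' ω) ω b a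
    · exact Or.inl h
    · rw [not_lt] at h
      exact Or.inr ⟨le_antisymm h zero_le, hω⟩
  have h1 : (1 : ℝ≥0∞) ≤ Q b {ω | 0 < M.S (σ' ω) ω b a} := by
    calc (1 : ℝ≥0∞) = Q b {ω | 0 < M.S (σ ω) ω b a} := hpos.symm
      _ ≤ Q b ({ω | 0 < M.S (σ' ω) ω b a}
          ∪ ({ω | M.S (σ' ω) ω b a = 0} ∩ {ω | 0 < M.S (σ ω) ω b a})) := measure_mono hsub
      _ ≤ Q b {ω | 0 < M.S (σ' ω) ω b a}
          + Q b ({ω | M.S (σ' ω) ω b a = 0} ∩ {ω | 0 < M.S (σ ω) ω b a}) :=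
        measure_union_le _ _
      _ = Q b {ω | 0 < M.S (σ' ω) ω b a} := by rw [hnull, add_zero]
  exact le_antisymm prob_le_one h1

lemma martingaleOn_congr {F : Filtration ℝ mΩ} {Qm : Measure Ω} {X Y : ℝ → Ω → ℝ}
    (h : ∀ t ∈ Set.Icc (0:ℝ) T, X t = Y t) (hXY : MartingaleOn F Qm X T) :
    MartingaleOn F Qm Y T := by
  obtain ⟨h1, h2⟩ := hXY
  constructor
  · intro t ht
    rw [← h t ht]
    exact h1 t ht
  · intro r' hr' t ht hrt
    rw [← h t ht, ← h r' hr']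
    exact h2 r' hr' t ht hrt

end ZZ

namespace ZZ
open MeasureTheory Filter Set Function
open scoped ENNReal

variable {d : ℕ} {Ω : Type*} [mΩ : MeasurableSpace Ω] {T : ℝ} {M : MarketModel d Ω T}
  {Q : Fin d → Measure Ω} {τ : Ω → ℝ}

section Mart

variable (hQ : NumeraireConsistent M Q) (a b : Fin d)
  (hτ : RST M.F τ) (hτT : ∀ ω, τ ω ∈ Set.Icc (0:ℝ) T)

include hQ hτ hτT

omit hQ in
lemma min_range {t : ℝ} (ht : t ∈ Set.Icc (0:ℝ) T) :
    ∀ ω, min (τ ω) t ∈ Set.Icc (0:ℝ) t :=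
  fun ω => ⟨le_min (hτT ω).1 ht.1, min_le_right _ _⟩

omit hQ in
lemma X_eq (t : ℝ) :
    (fun ω => (M.S (min t (τ ω)) ω a b).toReal)
      = fun ω => (M.S (min (τ ω) t) ω a b).toReal := by
  funext ω; rw [min_comm]

lemma X_integrable {t : ℝ} (ht : t ∈ Set.Icc (0:ℝ) T) :
    Integrable (fun ω => (M.S (min t (τ ω)) ω a b).toReal) (Q a) := by
  rw [X_eq a b hτ hτT t]
  refine integrable_toReal_of_lintegral_ne_top ?_ ?_
  · exact (S_stopped_meas_ambient a b (hτ.min_const t) ht (min_range hτ hτT ht)).aemeasurable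
  · exact ne_top_of_le_ne_top (S0_lt_top M a b).ne
      (lintegral_sigma_le hQ a b (hτ.min_const t) ht (min_range hτ hτT ht))

omit hQ in
lemma X_strongly_meas {t : ℝ} (ht : t ∈ Set.Icc (0:ℝ) T) :
    StronglyMeasurable[M.F t] (fun ω => (M.S (min t (τ ω)) ω a b).toReal) := by
  rw [X_eq a b hτ hτT t]
  exact (Measurable.ennreal_toReal
    (S_stopped_meas a b (hτ.min_const t) ht (min_range hτ hτT ht))).stronglyMeasurable

omit hQ hτT in
/-- membership of `s ∩ {r < τ}` in the σ-algebra of `τ ∧ u` for `u ≥ r`. -/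
lemma s2_measurable {s : Set Ω} {r u : ℝ} (hs : MeasurableSet[M.F r] s) (hru : r ≤ u) :
    MeasurableSet[(hτ.min_const u).measurableSpace] (s ∩ {ω | r < τ ω}) := by
  rw [RST.measurableSet]
  intro v
  by_cases hvr : r ≤ v
  · refine MeasurableSet.inter (MeasurableSet.inter ?_ ?_) ?_
    · exact (M.F.mono hvr) _ hs
    · have : {ω | r < τ ω} = {ω | τ ω ≤ r}ᶜ := by
        ext ω; simp [not_le]
      rw [this]
      exact (M.F.mono hvr) _ (hτ.measurableSet_le r).compl
    · exact (hτ.min_const u).measurableSet_le v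
  · push_neg at hvr
    have hemp : (s ∩ {ω | r < τ ω}) ∩ {ω | min (τ ω) u ≤ v} = ∅ := by
      ext ω
      simp only [Set.mem_inter_iff, Set.mem_setOf_eq, Set.mem_empty_iff_false, iff_false]
      rintro ⟨⟨_, hrτ⟩, hmin⟩
      rcases min_le_iff.1 hmin with h | h <;> linarith
    rw [hemp]
    exact @MeasurableSet.empty Ω (M.F v)

/-- the set-integral identity for the stopped process on `F(τ ∧ u)`-sets. -/
lemma stopped_setIntegral (hpos : Q b {ω | 0 < M.S (τ ω) ω b a} = 1)
    {u : ℝ} (hu : u ∈ Set.Icc (0:ℝ) T) {A : Set Ω}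
    (hA : MeasurableSet[(hτ.min_const u).measurableSpace] A) :
    ∫ ω in A, (M.S (min (τ ω) u) ω a b).toReal ∂(Q a)
      = (M.S0 a b * Q b A).toReal := by
  have hposu : Q b {ω | 0 < M.S (min (τ ω) u) ω b a} = 1 :=
    pos_transfer hQ a b hτ (TmemT M) hτT (hτ.min_const u) hu (min_range hτ hτT hu)
      (fun ω => min_le_left _ _) hpos
  have hlq := key_equality hQ a b (hτ.min_const u) hu (min_range hτ hτT hu) hposu hA
  have hmeas := S_stopped_meas_ambient a b (hτ.min_const u) hu (min_range hτ hτT hu)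
  have hfin : ∀ᵐ ω ∂((Q a).restrict A), M.S (min (τ ω) u) ω a b < ∞ :=
    ae_restrict_of_ae (sigma_ae_lt_top hQ a b (hτ.min_const u) hu (min_range hτ hτT hu))
  have := integral_toReal hmeas.aemeasurable.restrict hfin
  rw [this, hlq]

include hτT in
/-- Part (1⇐): positivity implies the stopped process is a martingale. -/
lemma mart_of_pos (hpos : Q b {ω | 0 < M.S (τ ω) ω b a} = 1) :
    MartingaleOn M.F (Q a) (fun t ω => (M.S (min t (τ ω)) ω a b).toReal) T := by
  haveI := hQ.1 a
  constructor
  · intro t ht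
    exact ⟨X_strongly_meas a b hτ hτT ht, X_integrable hQ a b hτ hτT ht⟩
  · intro r hr t ht hrt
    haveI : SigmaFinite ((Q a).trim (M.F.le r)) := by infer_instance
    refine (ae_eq_condExp_of_forall_setIntegral_eq (M.F.le r)
      (X_integrable hQ a b hτ hτT ht)
      (fun s _ _ => (X_integrable hQ a b hτ hτT hr).integrableOn)
      (fun s hs _ => ?_) ?_).symm
    swap
    · exact ⟨_, X_strongly_meas a b hτ hτT hr, Filter.EventuallyEq.rfl⟩
    -- set-integral equality
    have hsmb : MeasurableSet s := M.F.le r _ hs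
    have hτrmb : MeasurableSet {ω | τ ω ≤ r} := M.F.le r _ (hτ.measurableSet_le r)
    set s1 := s ∩ {ω | τ ω ≤ r} with hs1
    set s2 := s ∩ {ω | r < τ ω} with hs2
    have hsplit : s = s1 ∪ s2 := by
      ext ω
      simp only [hs1, hs2, Set.mem_union, Set.mem_inter_iff, Set.mem_setOf_eq]
      constructor
      · intro hω
        rcases le_or_gt (τ ω) r with h | h
        · exact Or.inl ⟨hω, h⟩
        · exact Or.inr ⟨hω, h⟩
      · rintro (⟨hω, _⟩ | ⟨hω, _⟩) <;> exact hω
    have hdisj : Disjoint s1 s2 := by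
      rw [Set.disjoint_left]
      rintro ω ⟨_, h1⟩ ⟨_, h2⟩
      rw [Set.mem_setOf_eq] at h1 h2
      linarith
    have hs2mb : MeasurableSet s2 := hsmb.inter (hτrmb.compl.congr ?_)
    swap
    · ext ω; simp [not_le]
    have hs1mb : MeasurableSet s1 := hsmb.inter hτrmb
    have heq1 : ∫ ω in s1, (M.S (min t (τ ω)) ω a b).toReal ∂(Q a)
        = ∫ ω in s1, (M.S (min r (τ ω)) ω a b).toReal ∂(Q a) := by
      refine setIntegral_congr_fun hs1mb fun ω hω => ?_
      have hωr : τ ω ≤ r := hω.2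
      rw [min_eq_right (le_trans hωr hrt), min_eq_right hωr]
    have heq2 : ∫ ω in s2, (M.S (min t (τ ω)) ω a b).toReal ∂(Q a)
        = ∫ ω in s2, (M.S (min r (τ ω)) ω a b).toReal ∂(Q a) := by
      have h2t := stopped_setIntegral hQ a b hτ hτT hpos ht (s2_measurable hτ hs hrt)
      have h2r := stopped_setIntegral hQ a b hτ hτT hpos hr (s2_measurable hτ hs le_rfl)
      calc ∫ ω in s2, (M.S (min t (τ ω)) ω a b).toReal ∂(Q a)
          = ∫ ω in s2, (M.S (min (τ ω) t) ω a b).toReal ∂(Q a) := by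
            rw [X_eq a b hτ hτT t]
        _ = (M.S0 a b * Q b s2).toReal := h2t
        _ = ∫ ω in s2, (M.S (min (τ ω) r) ω a b).toReal ∂(Q a) := h2r.symm
        _ = ∫ ω in s2, (M.S (min r (τ ω)) ω a b).toReal ∂(Q a) := by
            rw [X_eq a b hτ hτT r]
    calc ∫ ω in s, (M.S (min r (τ ω)) ω a b).toReal ∂(Q a)
        = ∫ ω in s1 ∪ s2, (M.S (min r (τ ω)) ω a b).toReal ∂(Q a) := by rw [← hsplit]
      _ = ∫ ω in s1, (M.S (min r (τ ω)) ω a b).toReal ∂(Q a)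
          + ∫ ω in s2, (M.S (min r (τ ω)) ω a b).toReal ∂(Q a) :=
          setIntegral_union hdisj hs2mb
            (X_integrable hQ a b hτ hτT hr).integrableOn
            (X_integrable hQ a b hτ hτT hr).integrableOn
      _ = ∫ ω in s1, (M.S (min t (τ ω)) ω a b).toReal ∂(Q a)
          + ∫ ω in s2, (M.S (min t (τ ω)) ω a b).toReal ∂(Q a) := by
          rw [heq1, heq2]
      _ = ∫ ω in s1 ∪ s2, (M.S (min t (τ ω)) ω a b).toReal ∂(Q a) :=
          (setIntegral_union hdisj hs2mb
            (X_integrable hQ a b hτ hτT ht).integrableOn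
            (X_integrable hQ a b hτ hτT ht).integrableOn).symm
      _ = ∫ ω in s, (M.S (min t (τ ω)) ω a b).toReal ∂(Q a) := by rw [← hsplit]

include hτT in
/-- Part (1⇒): the martingale property implies positivity. -/
lemma pos_of_mart
    (hmart : MartingaleOn M.F (Q a) (fun t ω => (M.S (min t (τ ω)) ω a b).toReal) T) :
    Q b {ω | 0 < M.S (τ ω) ω b a} = 1 := by
  haveI := hQ.1 a
  haveI := hQ.1 b
  haveI : SigmaFinite ((Q a).trim (M.F.le 0)) := by infer_instance
  set c := M.S0 a b with hc
  have hc0 : c ≠ 0 := S0_ne_zero (nonempty_of_NC hQ a) M a b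
  have hcT : c ≠ ∞ := (S0_lt_top M a b).ne
  have hcond := hmart.2 0 (mem0T M) T (TmemT M) M.T_pos.le
  have hXT : (fun ω => (M.S (min T (τ ω)) ω a b).toReal)
      = fun ω => (M.S (τ ω) ω a b).toReal := by
    funext ω; rw [min_eq_right (hτT ω).2]
  have hX0 : (fun ω => (M.S (min 0 (τ ω)) ω a b).toReal)
      = fun _ => (M.S0 a b).toReal := by
    funext ω
    rw [min_eq_left (hτT ω).1, M.init_S ω]
  have hint : ∫ ω, ((Q a)[fun ω => (M.S (min T (τ ω)) ω a b).toReal|M.F 0]) ω ∂(Q a)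
      = ∫ ω, (M.S (min T (τ ω)) ω a b).toReal ∂(Q a) := integral_condExp (M.F.le 0)
  have hint2 : ∫ ω, (M.S (min T (τ ω)) ω a b).toReal ∂(Q a) = (M.S0 a b).toReal := by
    rw [← hint, integral_congr_ae hcond]
    rw [show (fun t ω => (M.S (min t (τ ω)) ω a b).toReal) 0 = fun ω =>
      (M.S (min 0 (τ ω)) ω a b).toReal from rfl, hX0]
    rw [integral_const, probReal_univ]
    simp
  rw [hXT] at hint2
  -- lintegral version
  have hmeas := S_stopped_meas_ambient a b hτ (TmemT M) hτT
  have hlint_le := lintegral_sigma_le hQ a b hτ (TmemT M) hτT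
  have hlfin : ∫⁻ ω, M.S (τ ω) ω a b ∂(Q a) ≠ ∞ := ne_top_of_le_ne_top hcT hlint_le
  have hfin : ∀ᵐ ω ∂(Q a), M.S (τ ω) ω a b < ∞ :=
    sigma_ae_lt_top hQ a b hτ (TmemT M) hτT
  have htoReal := integral_toReal hmeas.aemeasurable hfin
  rw [hint2] at htoReal
  have hleq : ∫⁻ ω, M.S (τ ω) ω a b ∂(Q a) = c :=
    (ENNReal.toReal_eq_toReal_iff' hlfin hcT).1 htoReal.symm
  -- Fatou bound
  have hfatou := fatou_raw hQ a b hτ (TmemT M) hτT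
    (fun m => raw_univ hτ (TmemT M) m) MeasurableSet.univ
  rw [Measure.restrict_univ, Set.univ_inter, hleq] at hfatou
  have h1 : (1:ℝ≥0∞) ≤ Q b {ω | 0 < M.S (τ ω) ω b a} := by
    refine (ENNReal.mul_le_mul_iff_right hc0 hcT).1 ?_
    rw [mul_one]
    exact hfatou
  exact le_antisymm prob_le_one h1

end Mart

end ZZ

/-- Proposition, part (c): for a numéraire-consistent family `(Q_i)` and a
stopping time `τ` with values in `[0, T]`: `S_{i,j}^τ` is a `Q_i`-martingale iff
`Q_j(S_{j,i}(τ) > 0) = 1`; in that case `dQ_j/dQ_i|_{F(τ)} = S_{j,i}(0) S_{i,j}(τ)`;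
and (with `τ = T`) `S_{i,j}` is a true `Q_i`-martingale iff `Q_j(S_{j,i}(T) > 0) = 1`. -/
theorem numeraireConsistent_stopped_martingale_iff {d : ℕ} {Ω : Type*} [MeasurableSpace Ω]
    {T : ℝ} (hd : 0 < d) (M : MarketModel d Ω T) (Q : Fin d → Measure Ω)
    (hQ : NumeraireConsistent M Q) (i j : Fin d)
    (τ : Ω → ℝ) (hτ : IsStoppingTime M.F (fun ω => (τ ω : WithTop ℝ))) (hτT : ∀ ω, τ ω ∈ Set.Icc (0 : ℝ) T) :
    (MartingaleOn M.F (Q i) (fun t ω => (M.S (min t (τ ω)) ω i j).toReal) T ↔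
      Q j {ω | 0 < M.S (τ ω) ω j i} = 1) ∧
    (Q j {ω | 0 < M.S (τ ω) ω j i} = 1 →
      ∀ A : Set Ω, (∀ t : ℝ, MeasurableSet[M.F t] (A ∩ {ω | τ ω ≤ t})) →
        Q j A = ∫⁻ ω in A, M.S0 j i * M.S (τ ω) ω i j ∂(Q i)) ∧
    (MartingaleOn M.F (Q i) (fun t ω => (M.S t ω i j).toReal) T ↔
      Q j {ω | 0 < M.S T ω j i} = 1) := by
  haveI := hQ.1 j
  have hτ' : ZZ.RST M.F τ := fun t => by simpa using hτ.measurableSet_le t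
  refine ⟨⟨fun hm => ZZ.pos_of_mart hQ i j hτ' hτT hm,
      fun hp => ZZ.mart_of_pos hQ i j hτ' hτT hp⟩, ?_, ?_⟩
  · intro hp A hA
    have hkey := ZZ.key_equality hQ i j hτ' (ZZ.TmemT M) hτT hp hA
    have hmeasf := ZZ.S_stopped_meas_ambient i j hτ' (ZZ.TmemT M) hτT
    rw [lintegral_const_mul (M.S0 j i) hmeasf, hkey, ← mul_assoc,
      ZZ.S0_mul_symm (ZZ.nonempty_of_NC hQ i) M j i, one_mul]
  · constructor
    · intro hm
      have hm' : MartingaleOn M.F (Q i)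
          (fun t ω => (M.S (min t ((fun _ => T) ω)) ω i j).toReal) T := by
        refine ZZ.martingaleOn_congr (fun t ht => ?_) hm
        funext ω
        rw [min_eq_left ht.2]
      exact ZZ.pos_of_mart hQ i j (ZZ.RST_const M.F T)
        (fun ω => ZZ.TmemT M) hm'
    · intro hp
      have hmm := ZZ.mart_of_pos hQ i j (ZZ.RST_const M.F T)
        (fun ω => ZZ.TmemT M) hp
      refine ZZ.martingaleOn_congr (fun t ht => ?_) hmm
      funext ω
      rw [min_eq_left ht.2]
end
end

section
/- Suppose (Q_i)_{i=1}^d is a numéraire-consistent family of probability measures. Fix i and set w_{i,j} = S_{i,j}(0)/∑_k S_{i,k}(0) ∈ (0,1) for each j. Then ∑_j w_{i,j} = 1 and 1 − (∑_k S_{i,k}(0))^{−1}·E^{Q_i}[∑_j S_{i,j}(T)] = ∑_j w_{i,j}·Q_j(S_{j,i}(T) = 0); that is, the normalized expected decrease of the total value of all currencies measured in the i-th currency equals the weighted sum of the probabilities that the i-th currency completely devalues. -/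
open MeasureTheory Filter Set Function
open scoped ENNReal

noncomputable section

/-- interpretation of numéraire-consistency: with weights
`w j = S_{i,j}(0) / ∑_k S_{i,k}(0)`, one has `∑ j, w j = 1` and the normalized expected
decrease of the total value of all currencies in units of the `i`-th currency equals the
weighted sum of the probabilities that the `i`-th currency completely devalues. -/
theorem numeraireConsistent_expected_devaluation {d : ℕ} {Ω : Type*} [MeasurableSpace Ω]
    {T : ℝ} (hd : 0 < d) (M : MarketModel d Ω T) (Q : Fin d → Measure Ω)
    (hQ : NumeraireConsistent M Q) (i : Fin d)
    (w : Fin d → ℝ≥0∞) (hw : ∀ j, w j = M.S0 i j / ∑ k, M.S0 i k) :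
    (∑ j, w j) = 1 ∧
    1 - (∑ k, M.S0 i k)⁻¹ * ∫⁻ ω, ∑ j, M.S T ω i j ∂(Q i)
      = ∑ j, w j * Q j {ω | M.S T ω j i = 0} := by
  obtain ⟨hprob, hcons⟩ := hQ
  have hΩ : Nonempty Ω := by
    by_contra h
    have h1 := (hprob i).measure_univ
    rw [Set.univ_eq_empty_iff.2 (not_nonempty_iff.1 h), measure_empty] at h1
    exact zero_ne_one h1
  obtain ⟨ω0⟩ := hΩ
  have hT0 : (0:ℝ) ∈ Set.Icc 0 T := ⟨le_refl 0, M.T_pos.le⟩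
  have hTT : T ∈ Set.Icc 0 T := ⟨M.T_pos.le, le_refl T⟩
  have hS00 : M.S 0 ω0 = M.S0 := M.init_S ω0
  have hdiag : M.S0 i i = 1 := by
    have h := (M.exchange_S 0 hT0 ω0).diag i
    rwa [hS00] at h
  set c : ℝ≥0∞ := ∑ k, M.S0 i k with hc
  have hctop : c ≠ ∞ := (M.active_S0 i).ne
  have hc0 : c ≠ 0 := by
    have h1 : (1:ℝ≥0∞) ≤ c := by
      rw [← hdiag]
      exact Finset.single_le_sum (fun _ _ => zero_le) (Finset.mem_univ i)
    intro h0; rw [h0] at h1; exact (not_le.2 zero_lt_one) h1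
  have hsumw : (∑ j, w j) = 1 := by
    simp only [hw, div_eq_mul_inv, ← Finset.sum_mul, ← hc]
    exact ENNReal.mul_inv_cancel hc0 hctop
  refine ⟨hsumw, ?_⟩
  have hmeas : ∀ a b : Fin d, Measurable fun ω => M.S T ω a b := fun a b =>
    (M.adapted_S T hTT a b).mono (M.F.le T) le_rfl
  -- probabilities of positivity and of devaluation
  set p : Fin d → ℝ≥0∞ := fun j => Q j {ω | 0 < M.S T ω j i} with hp
  set z : Fin d → ℝ≥0∞ := fun j => Q j {ω | M.S T ω j i = 0} with hz
  have hpz : ∀ j, p j + z j = 1 := by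
    intro j
    have hms : MeasurableSet {ω | 0 < M.S T ω j i} :=
      measurableSet_lt measurable_const (hmeas j i)
    have hcompl : {ω | M.S T ω j i = 0} = {ω | 0 < M.S T ω j i}ᶜ := by
      ext ω; simp [pos_iff_ne_zero]
    have := measure_add_measure_compl (μ := Q j) hms
    rw [(hprob j).measure_univ] at this
    show Q j {ω | 0 < M.S T ω j i} + Q j {ω | M.S T ω j i = 0} = 1
    rw [hcompl]
    exact this
  -- the key consequence of numéraire consistency
  have hkey : ∀ j, ∫⁻ ω, M.S T ω i j ∂(Q i) = M.S0 i j * p j := by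
    intro j
    have h := hcons i j T hTT Set.univ MeasurableSet.univ
    simpa using h
  have hint : ∫⁻ ω, ∑ j, M.S T ω i j ∂(Q i) = ∑ j, M.S0 i j * p j := by
    rw [lintegral_finset_sum _ (fun j _ => hmeas i j)]
    exact Finset.sum_congr rfl fun j _ => hkey j
  have hwj : ∀ j, w j = M.S0 i j * c⁻¹ := fun j => by rw [hw, div_eq_mul_inv]
  have hmul : c⁻¹ * ∑ j, M.S0 i j * p j = ∑ j, w j * p j := by
    rw [Finset.mul_sum]
    exact Finset.sum_congr rfl fun j _ => by rw [hwj j]; ring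
  have hwp_le : (∑ j, w j * p j) ≤ 1 := by
    rw [← hsumw]
    refine Finset.sum_le_sum fun j _ => ?_
    have hpj : p j ≤ 1 := prob_le_one
    calc w j * p j ≤ w j * 1 := mul_le_mul_right hpj _
      _ = w j := mul_one _
  have hsplit : (1:ℝ≥0∞) = (∑ j, w j * z j) + ∑ j, w j * p j := by
    rw [← Finset.sum_add_distrib, ← hsumw]
    refine Finset.sum_congr rfl fun j _ => ?_
    rw [← mul_add, add_comm (z j) (p j), hpz j, mul_one]
  rw [hint, hmul]
  exact ENNReal.sub_eq_of_eq_add (ne_top_of_le_ne_top ENNReal.one_ne_top hwp_le) hsplit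
end
end
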